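/- Let S be an RN module over ℝ with base (Ω, F, P) and let D ∈ F̃ with D ⊂ H(S) and P(D) > 0. Then the following are equivalent: (1) Rank_D(S) ≥ 2; (2) for every ε ∈ L⁰(F,ℝ) with ε ≥ 0 and 0 < ε ≤ 2 on D there exist u, v ∈ S with ‖u‖ = ‖v‖ = I_D and ‖u − v‖ = ε·I_D. -/

import Mathlib

open MeasureTheory Filter Set

noncomputable section

namespace RNM

variable {Ω : Type*} [MeasurableSpace Ω]

/-- `L⁰(F, ℝ)`: equivalence classes of real random variables mod a.e. equality. -/
abbrev L0 (μ : Measure Ω) : Type _ := Ω →ₘ[μ] ℝ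

open Classical in
/-- The equivalence class of the indicator function of a (measurable) set. -/
noncomputable def ind (μ : Measure Ω) (A : Set Ω) : L0 μ :=
  if h : MeasurableSet A then
    AEEqFun.mk (A.indicator fun _ => (1 : ℝ)) (aestronglyMeasurable_const.indicator h)
  else 0

/-- The constant function, as an element of `L⁰`. -/
noncomputable def cst (μ : Measure Ω) (r : ℝ) : L0 μ := AEEqFun.const Ω r

/-- `A ⊂ B` modulo null sets. -/
def aeSub (μ : Measure Ω) (A B : Set Ω) : Prop := μ (A \ B) = 0

/-- `A = B` modulo null sets. -/
def aeEqS (μ : Measure Ω) (A B : Set Ω) : Prop := μ ((A \ B) ∪ (B \ A)) = 0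

variable {μ : Measure Ω} {S : Type*} [AddCommGroup S]

/-- The axioms of a random normed module over ℝ with base `(Ω, F, μ)`: `S` is a left module
over the algebra `L⁰(F,ℝ)` (with module multiplication `sm`) and `nrm` is an `L⁰`-norm. -/
structure IsRNModule (μ : Measure Ω) (sm : L0 μ → S → S) (nrm : S → L0 μ) : Prop where
  smul_add : ∀ ξ x y, sm ξ (x + y) = sm ξ x + sm ξ y
  add_smul : ∀ ξ η x, sm (ξ + η) x = sm ξ x + sm η x
  mul_smul : ∀ ξ η x, sm (ξ * η) x = sm ξ (sm η x)
  one_smul : ∀ x, sm 1 x = x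
  nrm_nonneg : ∀ x, 0 ≤ nrm x
  nrm_smul : ∀ ξ x, nrm (sm ξ x) = |ξ| * nrm x
  nrm_add : ∀ x y, nrm (x + y) ≤ nrm x + nrm y
  nrm_eq_zero : ∀ x, nrm x = 0 → x = 0

/-- `x` and `y` are `L⁰`-independent on `F`. -/
def Indep (sm : L0 μ → S → S) (x y : S) (F : Set Ω) : Prop :=
  ∀ ξ η : L0 μ, sm (ξ * ind μ F) x + sm (η * ind μ F) y = 0 →
    ξ * ind μ F = 0 ∧ η * ind μ F = 0

/-- `Rank_D(S) ≥ 2`. -/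
def RankGe2 (sm : L0 μ → S → S) (D : Set Ω) : Prop := ∃ x y : S, Indep sm x y D

/-- `A_x = [‖x‖ > 0]`. -/
def Aset (nrm : S → L0 μ) (x : S) : Set Ω := {ω | 0 < (nrm x) ω}

/-- `A_{xy} = A_x ∩ A_y`. -/
def Axy (nrm : S → L0 μ) (x y : S) : Set Ω := Aset nrm x ∩ Aset nrm y

/-- `B_{xy} = A_{xy} ∩ A_{x-y}`. -/
def Bxy (nrm : S → L0 μ) (x y : S) : Set Ω := Axy nrm x y ∩ Aset nrm (x - y)

/-- `H` is (a representative of) the support `H(S) = [⋁{‖x‖ : x ∈ S} > 0]`. -/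
def IsSupport (nrm : S → L0 μ) (H : Set Ω) : Prop :=
  MeasurableSet H ∧ (∀ x : S, aeSub μ (Aset nrm x) H) ∧
    ∀ B : Set Ω, MeasurableSet B → aeSub μ B H → 0 < μ B →
      ∃ x : S, 0 < μ (B ∩ Aset nrm x)

/-- A sequence in `S` is Cauchy for the topology of convergence in probability. -/
def CauchyInProb (μ : Measure Ω) (nrm : S → L0 μ) (u : ℕ → S) : Prop :=
  ∀ ε : ℝ, 0 < ε →
    Tendsto (fun p : ℕ × ℕ => μ {ω | ε ≤ |(nrm (u p.1 - u p.2)) ω|}) atTop (nhds 0)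

/-- `u n → x` in probability (i.e. `‖u n - x‖ → 0` in probability). -/
def TendstoInProb (μ : Measure Ω) (nrm : S → L0 μ) (u : ℕ → S) (x : S) : Prop :=
  ∀ ε : ℝ, 0 < ε →
    Tendsto (fun n => μ {ω | ε ≤ |(nrm (u n - x)) ω|}) atTop (nhds 0)

/-- Completeness of a random normed module. -/
def CompleteRN (μ : Measure Ω) (nrm : S → L0 μ) : Prop :=
  ∀ u : ℕ → S, CauchyInProb μ nrm u → ∃ x : S, TendstoInProb μ nrm u x

/-- The random unit sphere `S(1)`. -/
def sphere (nrm : S → L0 μ) : Set S :=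
  {x | ∃ A : Set Ω, MeasurableSet A ∧ 0 < μ A ∧ nrm x = ind μ A}

/-- The random closed unit ball `U(1)`. -/
def ball (nrm : S → L0 μ) : Set S := {x | nrm x ≤ 1}

/-- `ε` is an admissible random convexity parameter on `D`: `ε ≥ 0` and `0 < ε ≤ 2` on `D`. -/
def Admissible (μ : Measure Ω) (D : Set Ω) (ε : L0 μ) : Prop :=
  0 ≤ ε ∧ ∀ᵐ ω ∂μ, ω ∈ D → 0 < ε ω ∧ ε ω ≤ 2

/-- midpoint `(x+y)/2`. -/
def mid (μ : Measure Ω) (sm : L0 μ → S → S) (x y : S) : S := sm (cst μ (1/2)) (x + y)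

/-- The set whose infimum (in the a.s. order of `L⁰`) is the modulus of random
convexity `δ_D(ε)`. -/
def modSet (μ : Measure Ω) (sm : L0 μ → S → S) (nrm : S → L0 μ) (D : Set Ω) (ε : L0 μ) :
    Set (L0 μ) :=
  {z | ∃ x ∈ sphere nrm, ∃ y ∈ sphere nrm, aeSub μ D (Bxy nrm x y) ∧
    ε * ind μ D ≤ ind μ D * nrm (x - y) ∧
    z = ind μ D - ind μ D * nrm (mid μ sm x y)}

/-- `S` is random uniformly convex: `δ_{H(S)}(ε) > 0` on `H(S)` for every admissible `ε`. -/
def RandomUniformlyConvex (μ : Measure Ω) (sm : L0 μ → S → S) (nrm : S → L0 μ)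
    (H : Set Ω) : Prop :=
  ∀ ε : L0 μ, Admissible μ H ε → ∀ d : L0 μ, IsGLB (modSet μ sm nrm H ε) d →
    ∀ᵐ ω ∂μ, ω ∈ H → 0 < d ω

/-- `G` is (a representative of) `G(S)`. -/
def IsGSet (μ : Measure Ω) (sm : L0 μ → S → S) (H G : Set Ω) : Prop :=
  MeasurableSet G ∧ aeSub μ G H ∧ 0 < μ G ∧ RankGe2 sm G ∧
    ∀ D : Set Ω, MeasurableSet D → aeSub μ D (H \ G) → 0 < μ D → ¬ RankGe2 sm D



/-! ### Auxiliary toolkit -/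

section Toolkit
set_option linter.unusedSectionVars false

variable {μ : Measure Ω} [IsProbabilityMeasure μ] {S : Type*} [AddCommGroup S]
variable {sm : L0 μ → S → S} {nrm : S → L0 μ}

lemma ind_coe {A : Set Ω} (hA : MeasurableSet A) :
    ⇑(ind μ A) =ᵐ[μ] A.indicator (fun _ => (1:ℝ)) := by
  rw [ind, dif_pos hA]; exact AEEqFun.coeFn_mk _ _

lemma cst_coe (r : ℝ) : ⇑(cst μ r) =ᵐ[μ] fun _ => r := AEEqFun.coeFn_const _ _

lemma L0_one_coe : ⇑(1 : L0 μ) =ᵐ[μ] fun _ => (1:ℝ) := AEEqFun.coeFn_one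

lemma L0_abs_coe (f : L0 μ) : ⇑|f| =ᵐ[μ] fun ω => |f ω| := AEEqFun.coeFn_abs f

lemma L0_abs_zero : |(0 : L0 μ)| = 0 := by
  apply AEEqFun.ext
  filter_upwards [L0_abs_coe (0 : L0 μ), AEEqFun.coeFn_zero (β := ℝ) (μ := μ)] with ω h1 h2
  rw [h1, h2]; simp [h2]

lemma L0_zero_mul (f : L0 μ) : (0 : L0 μ) * f = 0 := by
  apply AEEqFun.ext
  filter_upwards [AEEqFun.coeFn_mul (0 : L0 μ) f, AEEqFun.coeFn_zero (β := ℝ) (μ := μ)]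
    with ω h1 h2
  simp [h1, h2]

lemma L0_abs_neg_one : |(-1 : L0 μ)| = 1 := by
  apply AEEqFun.ext
  filter_upwards [L0_abs_coe (-1 : L0 μ), AEEqFun.coeFn_neg (1 : L0 μ),
    L0_one_coe (μ := μ)] with ω h1 h2 h3
  rw [h1, h2]; simp [h3]

namespace IsRNModule

variable (h : IsRNModule μ sm nrm)
include h

lemma zero_sm (x : S) : sm 0 x = 0 := by
  have h2 := h.add_smul 0 0 x
  rw [add_zero] at h2
  exact add_eq_left.mp h2.symm

lemma sm_zero (ξ : L0 μ) : sm ξ 0 = 0 := by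
  have h2 := h.smul_add ξ 0 0
  rw [add_zero] at h2
  exact right_eq_add.mp h2

lemma neg_sm (ξ : L0 μ) (x : S) : sm (-ξ) x = -(sm ξ x) := by
  have h2 := h.add_smul ξ (-ξ) x
  rw [add_neg_cancel, h.zero_sm] at h2
  exact (neg_eq_of_add_eq_zero_right h2.symm).symm

lemma sm_neg (ξ : L0 μ) (x : S) : sm ξ (-x) = -(sm ξ x) := by
  have h2 := h.smul_add ξ x (-x)
  rw [add_neg_cancel, h.sm_zero] at h2
  exact (neg_eq_of_add_eq_zero_right h2.symm).symm

lemma sub_sm (ξ η : L0 μ) (x : S) : sm (ξ - η) x = sm ξ x - sm η x := by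
  rw [sub_eq_add_neg, h.add_smul, h.neg_sm, sub_eq_add_neg]

lemma sm_sub (ξ : L0 μ) (x y : S) : sm ξ (x - y) = sm ξ x - sm ξ y := by
  rw [sub_eq_add_neg, h.smul_add, h.sm_neg, sub_eq_add_neg]

lemma nrm_zero : nrm (0 : S) = 0 := by
  have h2 : nrm (0 : S) = |(0 : L0 μ)| * nrm (0 : S) := by
    rw [← h.nrm_smul, h.zero_sm]
  rwa [L0_abs_zero, L0_zero_mul] at h2

lemma nrm_neg (x : S) : nrm (-x) = nrm x := by
  have : sm (-1) x = -x := by rw [h.neg_sm, h.one_smul]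
  rw [← this, h.nrm_smul, L0_abs_neg_one, one_mul]

/-- reverse triangle inequality, pointwise a.e. -/
lemma nrm_abs_sub (A B : S) :
    ∀ᵐ ω ∂μ, |(nrm A) ω - (nrm B) ω| ≤ (nrm (A - B)) ω := by
  have h1 : nrm A ≤ nrm B + nrm (A - B) := by
    have := h.nrm_add B (A - B); rwa [add_sub_cancel] at this
  have h2 : nrm B ≤ nrm A + nrm (A - B) := by
    have := h.nrm_add A (B - A); rw [add_sub_cancel] at this
    rwa [← neg_sub A B, h.nrm_neg] at this
  filter_upwards [AEEqFun.coeFn_le.mpr h1, AEEqFun.coeFn_le.mpr h2,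
    AEEqFun.coeFn_add (nrm B) (nrm (A - B)), AEEqFun.coeFn_add (nrm A) (nrm (A - B))]
    with ω e1 e2 e3 e4
  rw [e3] at e1; rw [e4] at e2
  simp only [Pi.add_apply] at e1 e2
  rw [abs_sub_le_iff]
  constructor <;> linarith

end IsRNModule

end Toolkit

section Backward
set_option linter.unusedSectionVars false
variable {μ : Measure Ω} [IsProbabilityMeasure μ] {S : Type*} [AddCommGroup S]
variable {sm : L0 μ → S → S} {nrm : S → L0 μ}

lemma real_indep_aux {a b : ℝ} (h1 : |a| = |b|) (h2 : |a| = |a + b|) :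
    a = 0 ∧ b = 0 := by
  rcases abs_eq_abs.mp h2 with h | h
  · have hb : b = 0 := by linarith
    subst hb
    have : |a| = 0 := by rw [h1]; simp
    exact ⟨abs_eq_zero.mp this, rfl⟩
  · have hb : b = -2 * a := by linarith
    rw [hb, show -2 * a = -(2 * a) by ring, abs_neg, abs_mul, abs_two] at h1
    have ha : |a| = 0 := by linarith [abs_nonneg a]
    have ha0 : a = 0 := abs_eq_zero.mp ha
    refine ⟨ha0, by rw [hb, ha0]; ring⟩

lemma backward_dir (hRN : IsRNModule μ sm nrm) (D : Set Ω) (hDm : MeasurableSet D)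
    (h : ∀ ε : L0 μ, Admissible μ D ε →
      ∃ u v : S, nrm u = ind μ D ∧ nrm v = ind μ D ∧ nrm (u - v) = ε * ind μ D) :
    RankGe2 sm D := by
  have adm : Admissible μ D (1 : L0 μ) := by
    constructor
    · rw [← AEEqFun.coeFn_le]
      filter_upwards [L0_one_coe (μ := μ), AEEqFun.coeFn_zero (β := ℝ) (μ := μ)] with ω h1 h2
      rw [h1, h2]; norm_num
    · filter_upwards [L0_one_coe (μ := μ)] with ω h1
      intro _; rw [h1]; norm_num
  obtain ⟨u, v, hu, hv, huv⟩ := h 1 adm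
  refine ⟨u, v, fun ξ η heq => ?_⟩
  set I := ind μ D with hIdef
  have distrib : (ξ + η) * I = ξ * I + η * I := by
    apply AEEqFun.ext
    filter_upwards [AEEqFun.coeFn_mul (ξ + η) I, AEEqFun.coeFn_add ξ η,
      AEEqFun.coeFn_mul ξ I, AEEqFun.coeFn_mul η I, AEEqFun.coeFn_add (ξ * I) (η * I)]
      with ω a1 a2 a3 a4 a5
    simp only [Pi.add_apply, Pi.mul_apply] at *
    rw [a1, a5, a3, a4, a2]; ring
  have e1 : sm (ξ * I) u = -(sm (η * I) v) := eq_neg_of_add_eq_zero_left heq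
  have n1 : |ξ * I| * I = |η * I| * I := by
    calc |ξ * I| * I = nrm (sm (ξ * I) u) := by rw [hRN.nrm_smul, hu]
    _ = nrm (-(sm (η * I) v)) := by rw [e1]
    _ = nrm (sm (η * I) v) := hRN.nrm_neg _
    _ = |η * I| * I := by rw [hRN.nrm_smul, hv]
  have e2 : sm (ξ * I) (u - v) = -(sm ((ξ + η) * I) v) := by
    rw [hRN.sm_sub, distrib, hRN.add_smul, e1]; abel
  have n2 : |ξ * I| * I = |(ξ + η) * I| * I := by
    have huv' : nrm (u - v) = I := by rw [huv, one_mul]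
    calc |ξ * I| * I = nrm (sm (ξ * I) (u - v)) := by rw [hRN.nrm_smul, huv']
    _ = nrm (sm ((ξ + η) * I) v) := by rw [e2, hRN.nrm_neg]
    _ = |(ξ + η) * I| * I := by rw [hRN.nrm_smul, hv]
  have key : ∀ᵐ ω ∂μ, ξ ω * (I ω) = 0 ∧ η ω * (I ω) = 0 := by
    filter_upwards [ind_coe hDm, L0_abs_coe (ξ * I), L0_abs_coe (η * I),
      L0_abs_coe ((ξ + η) * I), AEEqFun.coeFn_mul ξ I, AEEqFun.coeFn_mul η I,
      AEEqFun.coeFn_mul (ξ + η) I, AEEqFun.coeFn_add ξ η,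
      AEEqFun.coeFn_mul (|ξ * I|) I, AEEqFun.coeFn_mul (|η * I|) I,
      AEEqFun.coeFn_mul (|(ξ + η) * I|) I]
      with ω hI a1 a2 a3 m1 m2 m3 m4 b1 b2 b3
    have w1 : (|ξ * I| * I) ω = (|η * I| * I) ω := by rw [n1]
    have w2 : (|ξ * I| * I) ω = (|(ξ + η) * I| * I) ω := by rw [n2]
    rw [b1, b2] at w1
    rw [b1, b3] at w2
    simp only [Pi.mul_apply] at w1 w2
    rw [a1, a2, m1, m2] at w1
    rw [a1, a3, m1, m3] at w2
    simp only [Pi.mul_apply, Pi.add_apply] at w1 w2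
    rw [m4] at w2
    simp only [Pi.add_apply] at w2
    by_cases hω : ω ∈ D
    · rw [hI] at w1 w2 ⊢
      simp only [Set.indicator_of_mem hω] at w1 w2 ⊢
      simp only [mul_one, abs_mul, abs_one] at w1 w2
      have := real_indep_aux (a := ξ ω) (b := η ω) (by simpa using w1) (by simpa using w2)
      simp [this.1, this.2]
    · rw [hI]
      simp [Set.indicator_of_notMem hω]
  constructor <;> apply AEEqFun.ext
  · filter_upwards [key, AEEqFun.coeFn_mul ξ I, AEEqFun.coeFn_zero (β := ℝ) (μ := μ)]
      with ω hk m z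
    rw [m, z]; simpa using hk.1
  · filter_upwards [key, AEEqFun.coeFn_mul η I, AEEqFun.coeFn_zero (β := ℝ) (μ := μ)]
      with ω hk m z
    rw [m, z]; simpa using hk.2

end Backward

section Forward
set_option linter.unusedSectionVars false
variable {μ : Measure Ω} [IsProbabilityMeasure μ] {S : Type*} [AddCommGroup S]

/-- `vec r s = r • e₁ + s • e₂`. -/
def vec (sm : L0 μ → S → S) (e₁ e₂ : S) (r s : ℝ) : S :=
  sm (cst μ r) e₁ + sm (cst μ s) e₂

/-- A nonnegative measurable representative of `‖vec p q‖` for rational `p, q`. -/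
def Nf (sm : L0 μ → S → S) (nrm : S → L0 μ) (e₁ e₂ : S) (pq : ℚ × ℚ) (ω : Ω) : ℝ :=
  |(nrm (vec sm e₁ e₂ (pq.1 : ℝ) (pq.2 : ℝ))) ω|

/-- The "pointwise norm" function, obtained by inf-convolution. -/
def Mf (sm : L0 μ → S → S) (nrm : S → L0 μ) (e₁ e₂ : S) (ω : Ω) (a b : ℝ) : ℝ :=
  ⨅ pq : ℚ × ℚ, (Nf sm nrm e₁ e₂ pq ω + |a - (pq.1 : ℝ)| + |b - (pq.2 : ℝ)|)

variable (sm : L0 μ → S → S) (nrm : S → L0 μ) (e₁ e₂ : S)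

lemma Nf_nonneg (pq : ℚ × ℚ) (ω : Ω) : 0 ≤ Nf sm nrm e₁ e₂ pq ω := abs_nonneg _

lemma Nf_meas (pq : ℚ × ℚ) : Measurable (Nf sm nrm e₁ e₂ pq) :=
  (AEEqFun.measurable _).abs

lemma Mf_bdd (ω : Ω) (a b : ℝ) : BddBelow (Set.range fun pq : ℚ × ℚ =>
    Nf sm nrm e₁ e₂ pq ω + |a - (pq.1 : ℝ)| + |b - (pq.2 : ℝ)|) := by
  refine ⟨0, fun z hz => ?_⟩
  obtain ⟨pq, rfl⟩ := hz
  have := Nf_nonneg sm nrm e₁ e₂ pq ω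
  positivity

lemma Mf_nonneg (ω : Ω) (a b : ℝ) : 0 ≤ Mf sm nrm e₁ e₂ ω a b :=
  le_ciInf fun pq => by
    have := Nf_nonneg sm nrm e₁ e₂ pq ω
    positivity

lemma Mf_le (ω : Ω) (a b : ℝ) (pq : ℚ × ℚ) :
    Mf sm nrm e₁ e₂ ω a b ≤ Nf sm nrm e₁ e₂ pq ω + |a - (pq.1 : ℝ)| + |b - (pq.2 : ℝ)| :=
  ciInf_le (Mf_bdd sm nrm e₁ e₂ ω a b) pq

lemma Mf_lip (ω : Ω) (a b a' b' : ℝ) :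
    Mf sm nrm e₁ e₂ ω a b ≤ Mf sm nrm e₁ e₂ ω a' b' + (|a - a'| + |b - b'|) := by
  have h2 : Mf sm nrm e₁ e₂ ω a b - (|a - a'| + |b - b'|) ≤ Mf sm nrm e₁ e₂ ω a' b' :=
    le_ciInf fun pq => by
      have := Mf_le sm nrm e₁ e₂ ω a b pq
      have t1 := abs_sub_le a a' (pq.1 : ℝ)
      have t2 := abs_sub_le b b' (pq.2 : ℝ)
      linarith
  linarith

lemma Mf_abs_sub (ω : Ω) (a b a' b' : ℝ) :
    |Mf sm nrm e₁ e₂ ω a b - Mf sm nrm e₁ e₂ ω a' b'| ≤ |a - a'| + |b - b'| := by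
  rw [abs_sub_le_iff]
  constructor
  · linarith [Mf_lip sm nrm e₁ e₂ ω a b a' b']
  · have := Mf_lip sm nrm e₁ e₂ ω a' b' a b
    rw [abs_sub_comm a' a, abs_sub_comm b' b] at this
    linarith

lemma Mf_measurable :
    Measurable (fun p : Ω × ℝ × ℝ => Mf sm nrm e₁ e₂ p.1 p.2.1 p.2.2) := by
  apply measurable_of_Iio
  intro r
  have : (fun p : Ω × ℝ × ℝ => Mf sm nrm e₁ e₂ p.1 p.2.1 p.2.2) ⁻¹' (Set.Iio r) =
      ⋃ pq : ℚ × ℚ, {p : Ω × ℝ × ℝ |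
        Nf sm nrm e₁ e₂ pq p.1 + |p.2.1 - (pq.1 : ℝ)| + |p.2.2 - (pq.2 : ℝ)| < r} := by
    ext p
    simp only [Set.mem_preimage, Set.mem_Iio, Set.mem_iUnion, Set.mem_setOf_eq]
    constructor
    · intro hp
      obtain ⟨pq, hz⟩ := exists_lt_of_ciInf_lt hp
      exact ⟨pq, hz⟩
    · rintro ⟨pq, hpq⟩
      exact lt_of_le_of_lt (Mf_le sm nrm e₁ e₂ p.1 p.2.1 p.2.2 pq) hpq
  rw [this]
  apply MeasurableSet.iUnion
  intro pq
  apply measurableSet_lt _ measurable_const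
  apply Measurable.add
  apply Measurable.add
  · exact (Nf_meas sm nrm e₁ e₂ pq).comp measurable_fst
  · exact ((measurable_fst.comp measurable_snd).sub measurable_const).abs
  · exact ((measurable_snd.comp measurable_snd).sub measurable_const).abs

lemma Mf_meas_comp {δ : Type*} [MeasurableSpace δ] {h : δ → Ω} {f g : δ → ℝ}
    (hh : Measurable h) (hf : Measurable f) (hg : Measurable g) :
    Measurable fun t => Mf sm nrm e₁ e₂ (h t) (f t) (g t) := by
  have : (fun t => Mf sm nrm e₁ e₂ (h t) (f t) (g t)) =
      (fun p : Ω × ℝ × ℝ => Mf sm nrm e₁ e₂ p.1 p.2.1 p.2.2) ∘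
        (fun t => (h t, f t, g t)) := rfl
  rw [this]
  exact (Mf_measurable sm nrm e₁ e₂).comp (hh.prodMk (hf.prodMk hg))

lemma Mf_meas_omega (a b : ℝ) : Measurable fun ω => Mf sm nrm e₁ e₂ ω a b :=
  Mf_meas_comp sm nrm e₁ e₂ measurable_id measurable_const measurable_const

lemma Mf_cont (ω : Ω) : Continuous fun p : ℝ × ℝ => Mf sm nrm e₁ e₂ ω p.1 p.2 := by
  apply LipschitzWith.continuous (K := 2)
  apply LipschitzWith.of_dist_le_mul
  intro p q
  rw [Real.dist_eq, Prod.dist_eq]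
  have h1 := Mf_abs_sub sm nrm e₁ e₂ ω p.1 p.2 q.1 q.2
  have d1 : |p.1 - q.1| ≤ max (dist p.1 q.1) (dist p.2 q.2) := by
    rw [← Real.dist_eq]; exact le_max_left _ _
  have d2 : |p.2 - q.2| ≤ max (dist p.1 q.1) (dist p.2 q.2) := by
    rw [← Real.dist_eq]; exact le_max_right _ _
  push_cast
  linarith

section CstVec

lemma cst_sub (r p : ℝ) : cst μ (r - p) = cst μ r - cst μ p := by
  apply AEEqFun.ext
  filter_upwards [cst_coe (μ := μ) (r - p), cst_coe (μ := μ) r, cst_coe (μ := μ) p,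
    AEEqFun.coeFn_sub (cst μ r) (cst μ p)] with ω a1 a2 a3 a4
  rw [a1, a4]; simp [a2, a3]

lemma cst_mul (r p : ℝ) : cst μ (r * p) = cst μ r * cst μ p := by
  apply AEEqFun.ext
  filter_upwards [cst_coe (μ := μ) (r * p), cst_coe (μ := μ) r, cst_coe (μ := μ) p,
    AEEqFun.coeFn_mul (cst μ r) (cst μ p)] with ω a1 a2 a3 a4
  rw [a1, a4]; simp [a2, a3]

lemma cst_zero : cst μ (0 : ℝ) = 0 := by
  apply AEEqFun.ext
  filter_upwards [cst_coe (μ := μ) 0, AEEqFun.coeFn_zero (β := ℝ) (μ := μ)] with ω a1 a2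
  rw [a1, a2]; rfl

lemma cst_one : cst μ (1 : ℝ) = 1 := by
  apply AEEqFun.ext
  filter_upwards [cst_coe (μ := μ) 1, L0_one_coe (μ := μ)] with ω a1 a2
  rw [a1, a2]

lemma cst_abs (r : ℝ) : |cst μ r| = cst μ |r| := by
  apply AEEqFun.ext
  filter_upwards [L0_abs_coe (cst μ r), cst_coe (μ := μ) r, cst_coe (μ := μ) |r|]
    with ω a1 a2 a3
  rw [a1, a2, a3]

variable {sm : L0 μ → S → S} {nrm : S → L0 μ} {e₁ e₂ : S}

lemma vec_sub (hRN : IsRNModule μ sm nrm) (r s p q : ℝ) :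
    vec sm e₁ e₂ r s - vec sm e₁ e₂ p q = vec sm e₁ e₂ (r - p) (s - q) := by
  unfold vec
  rw [cst_sub, cst_sub, hRN.sub_sm, hRN.sub_sm]
  abel

lemma vec_smul (hRN : IsRNModule μ sm nrm) (ρ r s : ℝ) :
    vec sm e₁ e₂ (ρ * r) (ρ * s) = sm (cst μ ρ) (vec sm e₁ e₂ r s) := by
  unfold vec
  rw [hRN.smul_add, ← hRN.mul_smul, ← hRN.mul_smul, ← cst_mul, ← cst_mul]

lemma vec_zero (hRN : IsRNModule μ sm nrm) : vec sm e₁ e₂ (0 : ℝ) 0 = 0 := by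
  unfold vec
  rw [cst_zero, hRN.zero_sm, hRN.zero_sm, add_zero]

lemma nrm_coe_nonneg (hRN : IsRNModule μ sm nrm) (z : S) : ∀ᵐ ω ∂μ, 0 ≤ (nrm z) ω := by
  filter_upwards [AEEqFun.coeFn_le.mpr (hRN.nrm_nonneg z),
    AEEqFun.coeFn_zero (β := ℝ) (μ := μ)] with ω a1 a2
  rw [a2] at a1; exact a1

variable {D : Set Ω}

lemma nrm_comb_bound (hRN : IsRNModule μ sm nrm) (hDm : MeasurableSet D)
    (hn1 : nrm e₁ = ind μ D) (hn2 : nrm e₂ = ind μ D) (ξ η : L0 μ) :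
    ∀ᵐ ω ∂μ, (nrm (sm ξ e₁ + sm η e₂)) ω ≤ |ξ ω| + |η ω| := by
  have hle : nrm (sm ξ e₁ + sm η e₂) ≤ |ξ| * ind μ D + |η| * ind μ D := by
    have := hRN.nrm_add (sm ξ e₁) (sm η e₂)
    rwa [hRN.nrm_smul, hRN.nrm_smul, hn1, hn2] at this
  filter_upwards [AEEqFun.coeFn_le.mpr hle,
    AEEqFun.coeFn_add (|ξ| * ind μ D) (|η| * ind μ D),
    AEEqFun.coeFn_mul (|ξ|) (ind μ D), AEEqFun.coeFn_mul (|η|) (ind μ D),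
    L0_abs_coe ξ, L0_abs_coe η, ind_coe hDm] with ω a1 a2 a3 a4 a5 a6 a7
  rw [a2] at a1
  simp only [Pi.add_apply, Pi.mul_apply] at a1
  rw [a3, a4] at a1
  simp only [Pi.mul_apply] at a1
  rw [a5, a6, a7] at a1
  refine a1.trans ?_
  by_cases hω : ω ∈ D
  · simp [Set.indicator_of_mem hω]
  · simp only [Set.indicator_of_notMem hω, mul_zero, add_zero, zero_add]
    positivity

lemma nrm_vec_bound (hRN : IsRNModule μ sm nrm) (hDm : MeasurableSet D)
    (hn1 : nrm e₁ = ind μ D) (hn2 : nrm e₂ = ind μ D) (a b : ℝ) :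
    ∀ᵐ ω ∂μ, (nrm (vec sm e₁ e₂ a b)) ω ≤ |a| + |b| := by
  filter_upwards [nrm_comb_bound hRN hDm hn1 hn2 (cst μ a) (cst μ b),
    cst_coe (μ := μ) a, cst_coe (μ := μ) b] with ω a1 a2 a3
  rw [a2, a3] at a1
  exact a1

lemma Nf_ae (hRN : IsRNModule μ sm nrm) (pq : ℚ × ℚ) :
    Nf sm nrm e₁ e₂ pq =ᵐ[μ] ⇑(nrm (vec sm e₁ e₂ (pq.1 : ℝ) (pq.2 : ℝ))) := by
  filter_upwards [nrm_coe_nonneg hRN (vec sm e₁ e₂ (pq.1 : ℝ) (pq.2 : ℝ))] with ω hω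
  exact abs_of_nonneg hω

/-- Key lemma (K1): `Mf ω r s` is a.e. a representative of `‖vec r s‖`. -/
lemma Mf_eq_nrm (hRN : IsRNModule μ sm nrm) (hDm : MeasurableSet D)
    (hn1 : nrm e₁ = ind μ D) (hn2 : nrm e₂ = ind μ D) (r s : ℝ) :
    ∀ᵐ ω ∂μ, Mf sm nrm e₁ e₂ ω r s = (nrm (vec sm e₁ e₂ r s)) ω := by
  have key : ∀ᵐ ω ∂μ, ∀ pq : ℚ × ℚ,
      |(nrm (vec sm e₁ e₂ r s)) ω - Nf sm nrm e₁ e₂ pq ω| ≤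
        |r - (pq.1 : ℝ)| + |s - (pq.2 : ℝ)| := by
    rw [ae_all_iff]
    intro pq
    filter_upwards [hRN.nrm_abs_sub (vec sm e₁ e₂ r s) (vec sm e₁ e₂ (pq.1 : ℝ) (pq.2 : ℝ)),
      nrm_vec_bound hRN hDm hn1 hn2 (r - (pq.1 : ℝ)) (s - (pq.2 : ℝ)),
      Nf_ae (e₁ := e₁) (e₂ := e₂) hRN pq]
      with ω a1 a2 a3
    rw [a3]
    rw [vec_sub hRN] at a1
    exact a1.trans a2
  filter_upwards [key] with ω hω
  apply le_antisymm
  · apply le_of_forall_pos_le_add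
    intro δ hδ
    obtain ⟨p, hp⟩ := exists_rat_near r (by linarith : (0:ℝ) < δ / 4)
    obtain ⟨q, hq⟩ := exists_rat_near s (by linarith : (0:ℝ) < δ / 4)
    have h1 := Mf_le sm nrm e₁ e₂ ω r s (p, q)
    have h2 := hω (p, q)
    rw [abs_sub_le_iff] at h2
    simp only at h1 h2
    linarith [h2.1, h2.2]
  · apply le_ciInf
    intro pq
    have h2 := hω pq
    rw [abs_sub_le_iff] at h2
    linarith [h2.1]

lemma L0_abs_ind (hA : MeasurableSet D) : |ind μ D| = ind μ D := by
  apply AEEqFun.ext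
  filter_upwards [L0_abs_coe (ind μ D), ind_coe hA] with ω a1 a2
  rw [a1, a2]
  by_cases hω : ω ∈ D <;> simp [Set.indicator, hω]

/-- a.e. rational Lipschitz property of `Nf`. -/
lemma Nf_lip_ae (hRN : IsRNModule μ sm nrm) (hDm : MeasurableSet D)
    (hn1 : nrm e₁ = ind μ D) (hn2 : nrm e₂ = ind μ D) :
    ∀ᵐ ω ∂μ, ∀ pq p'q' : ℚ × ℚ,
      |Nf sm nrm e₁ e₂ pq ω - Nf sm nrm e₁ e₂ p'q' ω| ≤
        |(pq.1 : ℝ) - (p'q'.1 : ℝ)| + |(pq.2 : ℝ) - (p'q'.2 : ℝ)| := by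
  rw [ae_all_iff]
  intro pq
  rw [ae_all_iff]
  intro p'q'
  filter_upwards [hRN.nrm_abs_sub (vec sm e₁ e₂ (pq.1 : ℝ) (pq.2 : ℝ))
      (vec sm e₁ e₂ (p'q'.1 : ℝ) (p'q'.2 : ℝ)),
    nrm_vec_bound hRN hDm hn1 hn2 ((pq.1 : ℝ) - (p'q'.1 : ℝ)) ((pq.2 : ℝ) - (p'q'.2 : ℝ)),
    Nf_ae (e₁ := e₁) (e₂ := e₂) hRN pq, Nf_ae (e₁ := e₁) (e₂ := e₂) hRN p'q']
    with ω a1 a2 a3 a4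
  rw [a3, a4]
  rw [vec_sub hRN] at a1
  exact a1.trans a2

/-- a.e. rational homogeneity of `Nf`. -/
lemma Nf_hom_ae (hRN : IsRNModule μ sm nrm) :
    ∀ᵐ ω ∂μ, ∀ ρ p q : ℚ,
      Nf sm nrm e₁ e₂ (ρ * p, ρ * q) ω = |(ρ : ℝ)| * Nf sm nrm e₁ e₂ (p, q) ω := by
  rw [ae_all_iff]; intro ρ
  rw [ae_all_iff]; intro p
  rw [ae_all_iff]; intro q
  have hL0 : nrm (vec sm e₁ e₂ ((ρ * p : ℚ) : ℝ) ((ρ * q : ℚ) : ℝ)) =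
      cst μ |(ρ : ℝ)| * nrm (vec sm e₁ e₂ (p : ℝ) (q : ℝ)) := by
    push_cast
    rw [vec_smul hRN, hRN.nrm_smul, cst_abs]
  filter_upwards [Nf_ae (e₁ := e₁) (e₂ := e₂) hRN ((ρ * p, ρ * q) : ℚ × ℚ),
    Nf_ae (e₁ := e₁) (e₂ := e₂) hRN ((p, q) : ℚ × ℚ),
    AEEqFun.coeFn_mul (cst μ |(ρ : ℝ)|) (nrm (vec sm e₁ e₂ (p : ℝ) (q : ℝ))),
    cst_coe (μ := μ) |(ρ : ℝ)|] with ω a1 a2 a3 a4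
  rw [a1, a2, hL0, a3]
  simp only [Pi.mul_apply]
  rw [a4]

lemma Nf_zero_ae (hRN : IsRNModule μ sm nrm) :
    ∀ᵐ ω ∂μ, Nf sm nrm e₁ e₂ ((0, 0) : ℚ × ℚ) ω = 0 := by
  have h0 : nrm (vec sm e₁ e₂ ((0:ℚ) : ℝ) ((0:ℚ) : ℝ)) = 0 := by
    push_cast
    rw [vec_zero hRN, hRN.nrm_zero]
  filter_upwards [Nf_ae (e₁ := e₁) (e₂ := e₂) hRN ((0, 0) : ℚ × ℚ),
    AEEqFun.coeFn_zero (β := ℝ) (μ := μ)] with ω a1 a2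
  rw [a1, h0, a2]; rfl

/-- pointwise homogeneity of `Mf`, on the good set. -/
lemma Mf_hom_pt {ω : Ω}
    (hL : ∀ pq p'q' : ℚ × ℚ, |Nf sm nrm e₁ e₂ pq ω - Nf sm nrm e₁ e₂ p'q' ω| ≤
        |(pq.1 : ℝ) - (p'q'.1 : ℝ)| + |(pq.2 : ℝ) - (p'q'.2 : ℝ)|)
    (hH : ∀ ρ p q : ℚ, Nf sm nrm e₁ e₂ (ρ * p, ρ * q) ω = |(ρ : ℝ)| * Nf sm nrm e₁ e₂ (p, q) ω)
    (hZ : Nf sm nrm e₁ e₂ ((0, 0) : ℚ × ℚ) ω = 0) :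
    ∀ r a b : ℝ, Mf sm nrm e₁ e₂ ω (r * a) (r * b) = |r| * Mf sm nrm e₁ e₂ ω a b := by
  have hL2 : ∀ (a b : ℝ) (pq : ℚ × ℚ),
      Nf sm nrm e₁ e₂ pq ω - (|a - (pq.1 : ℝ)| + |b - (pq.2 : ℝ)|) ≤
        Mf sm nrm e₁ e₂ ω a b := by
    intro a b pq
    apply le_ciInf
    intro p'q'
    have h1 := hL pq p'q'
    rw [abs_sub_le_iff] at h1
    have t1 := abs_sub_le (pq.1 : ℝ) a (p'q'.1 : ℝ)
    have t2 := abs_sub_le (pq.2 : ℝ) b (p'q'.2 : ℝ)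
    rw [abs_sub_comm (pq.1 : ℝ) a] at t1
    rw [abs_sub_comm (pq.2 : ℝ) b] at t2
    linarith [h1.1]
  have hM00 : Mf sm nrm e₁ e₂ ω 0 0 = 0 := by
    apply le_antisymm _ (Mf_nonneg sm nrm e₁ e₂ ω 0 0)
    have hZ' : Nf sm nrm e₁ e₂ 0 ω = 0 := by rwa [Prod.mk_zero_zero] at hZ
    have := Mf_le sm nrm e₁ e₂ ω 0 0 ((0, 0) : ℚ × ℚ)
    simpa [hZ', hZ] using this
  have claim1 : ∀ r a b : ℝ,
      Mf sm nrm e₁ e₂ ω (r * a) (r * b) ≤ |r| * Mf sm nrm e₁ e₂ ω a b := by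
    intro r a b
    apply le_of_forall_pos_le_add
    intro δ hδ
    set M := Mf sm nrm e₁ e₂ ω a b with hM
    have hM0 : 0 ≤ M := Mf_nonneg sm nrm e₁ e₂ ω a b
    set K := 4 * (|r| + |a| + |b| + M + 4) with hK
    have hK0 : 0 < K := by positivity
    set δ' := min 1 (δ / K) with hδ'def
    have hδ'0 : 0 < δ' := lt_min one_pos (div_pos hδ hK0)
    have hδ'1 : δ' ≤ 1 := min_le_left _ _
    have hδ'K : δ' * K ≤ δ := by
      have h1 : δ' ≤ δ / K := min_le_right _ _
      calc δ' * K ≤ (δ / K) * K := by gcongr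
      _ = δ := by field_simp
    obtain ⟨p, hp⟩ := exists_rat_near a hδ'0
    obtain ⟨q, hq⟩ := exists_rat_near b hδ'0
    obtain ⟨ρ, hρ⟩ := exists_rat_near r hδ'0
    have hNp : |(p : ℝ)| ≤ |a| + 1 := by
      have := abs_sub_abs_le_abs_sub (p : ℝ) a
      rw [abs_sub_comm] at hp
      linarith [hp.le, hδ'1]
    have hNq : |(q : ℝ)| ≤ |b| + 1 := by
      have := abs_sub_abs_le_abs_sub (q : ℝ) b
      rw [abs_sub_comm] at hq
      linarith [hq.le, hδ'1]
    have hNf : Nf sm nrm e₁ e₂ (p, q) ω ≤ M + 2 * δ' := by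
      have := hL2 a b (p, q)
      simp only at this
      linarith [hp.le, hq.le]
    have hNf0 : 0 ≤ Nf sm nrm e₁ e₂ (p, q) ω := Nf_nonneg sm nrm e₁ e₂ (p, q) ω
    have hρa : |(ρ : ℝ)| ≤ |r| + δ' := by
      have := abs_sub_abs_le_abs_sub (ρ : ℝ) r
      rw [abs_sub_comm] at hρ
      linarith [hρ.le]
    have step1 : Mf sm nrm e₁ e₂ ω (r * a) (r * b) ≤
        Nf sm nrm e₁ e₂ (ρ * p, ρ * q) ω + |r * a - (ρ : ℝ) * (p : ℝ)| +
          |r * b - (ρ : ℝ) * (q : ℝ)| := by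
      have := Mf_le sm nrm e₁ e₂ ω (r * a) (r * b) ((ρ * p, ρ * q) : ℚ × ℚ)
      simpa using this
    rw [hH ρ p q] at step1
    have e2 : |r * a - (ρ : ℝ) * (p : ℝ)| ≤ |r| * δ' + δ' * (|a| + 1) := by
      have expand : r * a - (ρ : ℝ) * (p : ℝ) = r * (a - (p : ℝ)) + (r - (ρ : ℝ)) * (p : ℝ) := by
        ring
      rw [expand]
      refine (abs_add_le _ _).trans ?_
      rw [abs_mul, abs_mul]
      have b1 : |r| * |a - (p : ℝ)| ≤ |r| * δ' := by
        apply mul_le_mul_of_nonneg_left hp.le (abs_nonneg r)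
      have b2 : |r - (ρ : ℝ)| * |(p : ℝ)| ≤ δ' * (|a| + 1) := by
        apply mul_le_mul hρ.le hNp (abs_nonneg _) hδ'0.le
      linarith
    have e3 : |r * b - (ρ : ℝ) * (q : ℝ)| ≤ |r| * δ' + δ' * (|b| + 1) := by
      have expand : r * b - (ρ : ℝ) * (q : ℝ) = r * (b - (q : ℝ)) + (r - (ρ : ℝ)) * (q : ℝ) := by
        ring
      rw [expand]
      refine (abs_add_le _ _).trans ?_
      rw [abs_mul, abs_mul]
      have b1 : |r| * |b - (q : ℝ)| ≤ |r| * δ' := by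
        apply mul_le_mul_of_nonneg_left hq.le (abs_nonneg r)
      have b2 : |r - (ρ : ℝ)| * |(q : ℝ)| ≤ δ' * (|b| + 1) := by
        apply mul_le_mul hρ.le hNq (abs_nonneg _) hδ'0.le
      linarith
    have e1 : |(ρ : ℝ)| * Nf sm nrm e₁ e₂ (p, q) ω ≤ (|r| + δ') * (M + 2 * δ') :=
      mul_le_mul hρa hNf hNf0 (by positivity)
    have hsq : δ' * δ' ≤ δ' := mul_le_of_le_one_right hδ'0.le hδ'1
    have expand2 : (|r| + δ') * (M + 2 * δ') ≤ |r| * M + δ' * (2 * |r| + M + 2) := by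
      nlinarith [abs_nonneg r]
    have sum_le : δ' * (2 * |r| + M + 2) + (|r| * δ' + δ' * (|a| + 1)) +
        (|r| * δ' + δ' * (|b| + 1)) ≤ δ' * K := by
      rw [hK]
      nlinarith [hδ'0.le, abs_nonneg r, abs_nonneg a, abs_nonneg b]
    linarith
  intro r a b
  rcases eq_or_ne r 0 with h0 | h0
  · subst h0
    simp only [zero_mul, abs_zero]
    apply le_antisymm
    · simpa [hM00] using claim1 0 0 0
    · exact Mf_nonneg sm nrm e₁ e₂ ω 0 0
  · apply le_antisymm (claim1 r a b)
    have h2 := claim1 r⁻¹ (r * a) (r * b)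
    rw [inv_mul_cancel_left₀ h0, inv_mul_cancel_left₀ h0, abs_inv] at h2
    have h3 : |r| * Mf sm nrm e₁ e₂ ω a b ≤ |r| * (|r|⁻¹ * Mf sm nrm e₁ e₂ ω (r * a) (r * b)) :=
      mul_le_mul_of_nonneg_left h2 (abs_nonneg r)
    rwa [← mul_assoc, mul_inv_cancel₀ (abs_ne_zero.mpr h0), one_mul] at h3

lemma dyadic_close (n : ℕ) (x : ℝ) : |x - ((⌊x * 2^n⌋ : ℤ) : ℝ)/2^n| ≤ 1/2^n := by
  have h1 := Int.floor_le (x * 2^n)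
  have h2 := Int.lt_floor_add_one (x * 2^n)
  have hp : (0:ℝ) < 2^n := by positivity
  have key : x - ((⌊x * 2^n⌋ : ℤ) : ℝ)/2^n = (x * 2^n - ((⌊x * 2^n⌋ : ℤ) : ℝ))/2^n := by
    field_simp
  rw [key, abs_le]
  constructor
  · have h0 : 0 ≤ (x * 2^n - ((⌊x * 2^n⌋ : ℤ) : ℝ))/2^n := div_nonneg (by linarith) hp.le
    have h3 : (0:ℝ) < 1/2^n := by positivity
    linarith
  · calc (x * 2^n - ((⌊x * 2^n⌋ : ℤ) : ℝ))/2^n ≤ 1/2^n := by gcongr; linarith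

/-- Key lemma (K2): pointwise formula for the norm of a combination with `L⁰` coefficients. -/
lemma nrm_comb_eq (hRN : IsRNModule μ sm nrm) (hDm : MeasurableSet D)
    (hn1 : nrm e₁ = ind μ D) (hn2 : nrm e₂ = ind μ D)
    (α β : Ω → ℝ) (hα : Measurable α) (hβ : Measurable β) :
    ∀ᵐ ω ∂μ, (nrm (sm (AEEqFun.mk α hα.aestronglyMeasurable) e₁ +
        sm (AEEqFun.mk β hβ.aestronglyMeasurable) e₂)) ω =
      Mf sm nrm e₁ e₂ ω (α ω) (β ω) := by
  set W := sm (AEEqFun.mk α hα.aestronglyMeasurable) e₁ +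
    sm (AEEqFun.mk β hβ.aestronglyMeasurable) e₂ with hW
  have step : ∀ n : ℕ, ∀ᵐ ω ∂μ,
      |(nrm W) ω - Mf sm nrm e₁ e₂ ω (α ω) (β ω)| ≤ 4/2^n := by
    intro n
    set αn := fun ω => ((⌊α ω * 2^n⌋ : ℤ) : ℝ)/2^n with hαn
    set βn := fun ω => ((⌊β ω * 2^n⌋ : ℤ) : ℝ)/2^n with hβn
    have hαnm : Measurable αn :=
      (measurable_from_top.comp (hα.mul_const _).floor).div_const _
    have hβnm : Measurable βn :=
      (measurable_from_top.comp (hβ.mul_const _).floor).div_const _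
    set Wn := sm (AEEqFun.mk αn hαnm.aestronglyMeasurable) e₁ +
      sm (AEEqFun.mk βn hβnm.aestronglyMeasurable) e₂ with hWn
    have keyzw : ∀ zw : ℤ × ℤ, ∀ᵐ ω ∂μ, (⌊α ω * 2^n⌋ = zw.1 ∧ ⌊β ω * 2^n⌋ = zw.2) →
        (nrm Wn) ω = Mf sm nrm e₁ e₂ ω ((zw.1 : ℝ)/2^n) ((zw.2 : ℝ)/2^n) := by
      rintro ⟨z, w⟩
      set A := {ω | ⌊α ω * 2^n⌋ = z ∧ ⌊β ω * 2^n⌋ = w} with hA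
      have hAm : MeasurableSet A :=
        ((hα.mul_const _).floor (measurableSet_singleton z)).inter
          ((hβ.mul_const _).floor (measurableSet_singleton w))
      have hmul1 : ind μ A * AEEqFun.mk αn hαnm.aestronglyMeasurable =
          ind μ A * cst μ ((z : ℝ)/2^n) := by
        apply AEEqFun.ext
        filter_upwards [AEEqFun.coeFn_mul (ind μ A) (AEEqFun.mk αn hαnm.aestronglyMeasurable),
          AEEqFun.coeFn_mul (ind μ A) (cst μ ((z : ℝ)/2^n)),
          AEEqFun.coeFn_mk αn hαnm.aestronglyMeasurable, cst_coe (μ := μ) ((z : ℝ)/2^n),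
          ind_coe hAm] with ω m1 m2 m3 m4 m5
        rw [m1, m2]
        simp only [Pi.mul_apply]
        rw [m3, m4, m5]
        by_cases hω : ω ∈ A
        · have hz : ⌊α ω * 2^n⌋ = z := (Set.mem_setOf_eq ▸ hω).1
          simp [Set.indicator_of_mem hω, hαn, hz]
        · simp [Set.indicator_of_notMem hω]
      have hmul2 : ind μ A * AEEqFun.mk βn hβnm.aestronglyMeasurable =
          ind μ A * cst μ ((w : ℝ)/2^n) := by
        apply AEEqFun.ext
        filter_upwards [AEEqFun.coeFn_mul (ind μ A) (AEEqFun.mk βn hβnm.aestronglyMeasurable),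
          AEEqFun.coeFn_mul (ind μ A) (cst μ ((w : ℝ)/2^n)),
          AEEqFun.coeFn_mk βn hβnm.aestronglyMeasurable, cst_coe (μ := μ) ((w : ℝ)/2^n),
          ind_coe hAm] with ω m1 m2 m3 m4 m5
        rw [m1, m2]
        simp only [Pi.mul_apply]
        rw [m3, m4, m5]
        by_cases hω : ω ∈ A
        · have hz : ⌊β ω * 2^n⌋ = w := (Set.mem_setOf_eq ▸ hω).2
          simp [Set.indicator_of_mem hω, hβn, hz]
        · simp [Set.indicator_of_notMem hω]
      have h1 : sm (ind μ A) Wn =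
          sm (ind μ A) (vec sm e₁ e₂ ((z : ℝ)/2^n) ((w : ℝ)/2^n)) := by
        rw [hWn, hRN.smul_add, ← hRN.mul_smul, ← hRN.mul_smul, hmul1, hmul2,
          hRN.mul_smul, hRN.mul_smul, ← hRN.smul_add]
        rfl
      have hL0 : ind μ A * nrm Wn =
          ind μ A * nrm (vec sm e₁ e₂ ((z : ℝ)/2^n) ((w : ℝ)/2^n)) := by
        have h2 := congrArg nrm h1
        rwa [hRN.nrm_smul, hRN.nrm_smul, L0_abs_ind hAm] at h2
      filter_upwards [AEEqFun.coeFn_mul (ind μ A) (nrm Wn),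
        AEEqFun.coeFn_mul (ind μ A) (nrm (vec sm e₁ e₂ ((z : ℝ)/2^n) ((w : ℝ)/2^n))),
        ind_coe hAm, Mf_eq_nrm hRN hDm hn1 hn2 ((z : ℝ)/2^n) ((w : ℝ)/2^n)]
        with ω m1 m2 m3 m4
      intro hzw
      have hmem : ω ∈ A := by rw [hA]; exact hzw
      have w1 : (ind μ A * nrm Wn) ω =
          (ind μ A * nrm (vec sm e₁ e₂ ((z : ℝ)/2^n) ((w : ℝ)/2^n))) ω := by rw [hL0]
      rw [m1, m2] at w1
      simp only [Pi.mul_apply] at w1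
      rw [m3] at w1
      simp only [Set.indicator_of_mem hmem, one_mul] at w1
      rw [m4]
      exact w1
    have keyall : ∀ᵐ ω ∂μ, (nrm Wn) ω = Mf sm nrm e₁ e₂ ω (αn ω) (βn ω) := by
      filter_upwards [ae_all_iff.mpr keyzw] with ω h
      exact h (⌊α ω * 2^n⌋, ⌊β ω * 2^n⌋) ⟨rfl, rfl⟩
    have hsubW : W - Wn =
        sm (AEEqFun.mk α hα.aestronglyMeasurable - AEEqFun.mk αn hαnm.aestronglyMeasurable) e₁ +
        sm (AEEqFun.mk β hβ.aestronglyMeasurable - AEEqFun.mk βn hβnm.aestronglyMeasurable) e₂ := by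
      rw [hW, hWn, hRN.sub_sm, hRN.sub_sm]
      abel
    have hb : ∀ᵐ ω ∂μ, |(nrm W) ω - (nrm Wn) ω| ≤ 2/2^n := by
      filter_upwards [hRN.nrm_abs_sub W Wn,
        nrm_comb_bound hRN hDm hn1 hn2
          (AEEqFun.mk α hα.aestronglyMeasurable - AEEqFun.mk αn hαnm.aestronglyMeasurable)
          (AEEqFun.mk β hβ.aestronglyMeasurable - AEEqFun.mk βn hβnm.aestronglyMeasurable),
        AEEqFun.coeFn_sub (AEEqFun.mk α hα.aestronglyMeasurable)
          (AEEqFun.mk αn hαnm.aestronglyMeasurable),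
        AEEqFun.coeFn_sub (AEEqFun.mk β hβ.aestronglyMeasurable)
          (AEEqFun.mk βn hβnm.aestronglyMeasurable),
        AEEqFun.coeFn_mk α hα.aestronglyMeasurable,
        AEEqFun.coeFn_mk αn hαnm.aestronglyMeasurable,
        AEEqFun.coeFn_mk β hβ.aestronglyMeasurable,
        AEEqFun.coeFn_mk βn hβnm.aestronglyMeasurable] with ω a1 a2 s1 s2 c1 c2 c3 c4
      rw [← hsubW] at a2
      refine a1.trans (a2.trans ?_)
      rw [s1, s2]
      simp only [Pi.sub_apply]
      rw [c1, c2, c3, c4]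
      have d1 := dyadic_close n (α ω)
      have d2 := dyadic_close n (β ω)
      have : (2:ℝ)/2^n = 1/2^n + 1/2^n := by ring
      rw [this]
      exact add_le_add d1 d2
    filter_upwards [keyall, hb] with ω h1 h2
    have h3 := Mf_abs_sub sm nrm e₁ e₂ ω (αn ω) (βn ω) (α ω) (β ω)
    have d1 := dyadic_close n (α ω)
    have d2 := dyadic_close n (β ω)
    rw [abs_sub_comm (α ω) (αn ω)] at d1
    rw [abs_sub_comm (β ω) (βn ω)] at d2
    rw [h1] at h2
    have tri := abs_sub_le ((nrm W) ω) (Mf sm nrm e₁ e₂ ω (αn ω) (βn ω))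
      (Mf sm nrm e₁ e₂ ω (α ω) (β ω))
    have e4 : (4:ℝ)/2^n = 2/2^n + (1/2^n + 1/2^n) := by ring
    rw [e4]
    linarith
  rw [← ae_all_iff] at step
  filter_upwards [step] with ω h
  by_contra hne
  have hpos : 0 < |(nrm W) ω - Mf sm nrm e₁ e₂ ω (α ω) (β ω)| :=
    abs_pos.mpr (sub_ne_zero.mpr hne)
  obtain ⟨n, hn⟩ := exists_pow_lt_of_lt_one
    (by positivity : (0:ℝ) < |(nrm W) ω - Mf sm nrm e₁ e₂ ω (α ω) (β ω)|/4)
    (by norm_num : (1:ℝ)/2 < 1)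
  rw [div_pow, one_pow] at hn
  have h5 : (4:ℝ)/2^n = 4*(1/2^n) := by ring
  have := h n
  rw [h5] at this
  linarith

/-- a.e. homogeneity of `Mf`. -/
lemma Mf_hom (hRN : IsRNModule μ sm nrm) (hDm : MeasurableSet D)
    (hn1 : nrm e₁ = ind μ D) (hn2 : nrm e₂ = ind μ D) :
    ∀ᵐ ω ∂μ, ∀ r a b : ℝ,
      Mf sm nrm e₁ e₂ ω (r * a) (r * b) = |r| * Mf sm nrm e₁ e₂ ω a b := by
  filter_upwards [Nf_lip_ae hRN hDm hn1 hn2, Nf_hom_ae (e₁ := e₁) (e₂ := e₂) hRN,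
    Nf_zero_ae (e₁ := e₁) (e₂ := e₂) hRN] with ω h1 h2 h3
  exact Mf_hom_pt h1 h2 h3

end CstVec

section Select

lemma clamp_mem {s' : ℝ} (hs : 0 ≤ s') (q : ℝ) : max 0 (min s' q) ∈ Set.Icc 0 s' :=
  ⟨le_max_left _ _, max_le hs (min_le_left _ _)⟩

lemma clamp_dist {s' t : ℝ} (h0 : 0 ≤ t) (hs : t ≤ s') (q : ℝ) :
    |max 0 (min s' q) - t| ≤ |q - t| := by
  rcases le_total q 0 with h | h
  · rw [max_eq_left (by linarith [min_le_right s' q] : min s' q ≤ 0)]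
    rw [abs_of_nonpos (by linarith), abs_of_nonpos (by linarith)]
    linarith [min_le_right s' q]
  · rcases le_total q s' with h2 | h2
    · rw [min_eq_right h2, max_eq_right h]
    · rw [min_eq_left h2, max_eq_right (h0.trans hs)]
      rw [abs_of_nonneg (by linarith), abs_of_nonneg (by linarith)]
      linarith

/-- Measurable selection of the first time a continuous path crosses a level. -/
lemma select {μ : Measure Ω} (F : Ω → ℝ → ℝ) (T : ℝ) (hT : 0 < T) (W : Set Ω)
    (hW : MeasurableSet W)
    (hFm : ∀ t : ℝ, Measurable (fun ω => F ω t))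
    (hFc : ∀ ω ∈ W, Continuous (F ω))
    (r : Ω → ℝ) (hr : Measurable r)
    (hne : ∀ ω ∈ W, ∃ t ∈ Set.Icc 0 T, r ω ≤ F ω t) :
    ∃ ρ : Ω → ℝ, Measurable ρ ∧ ∀ ω ∈ W,
      ρ ω ∈ Set.Icc 0 T ∧ r ω ≤ F ω (ρ ω) ∧ ∀ t ∈ Set.Ico 0 (ρ ω), F ω t < r ω := by
  classical
  set G := fun ω => {t : ℝ | t ∈ Set.Icc 0 T ∧ r ω ≤ F ω t} with hG
  set ρ := fun ω => if ω ∈ W then sInf (G ω) else 0 with hρ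
  have hmem : ∀ ω ∈ W, sInf (G ω) ∈ G ω := by
    intro ω hω
    apply IsClosed.csInf_mem
    · exact isClosed_Icc.inter (isClosed_le continuous_const (hFc ω hω))
    · obtain ⟨t, ht, hrt⟩ := hne ω hω
      exact ⟨t, ht, hrt⟩
    · exact ⟨0, fun t ht => ht.1.1⟩
  have hnonneg : ∀ ω, 0 ≤ ρ ω := by
    intro ω
    by_cases hω : ω ∈ W
    · have h' : ρ ω = sInf (G ω) := by simp [hρ, hω]
      rw [h']
      exact le_csInf (by obtain ⟨t, ht, hrt⟩ := hne ω hω; exact ⟨t, ht, hrt⟩)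
        (fun t ht => ht.1.1)
    · simp [hρ, hω]
  refine ⟨ρ, ?_, ?_⟩
  · apply measurable_of_Iic
    intro s
    by_cases hs0 : s < 0
    · have : ρ ⁻¹' Set.Iic s = ∅ := by
        ext ω
        simp only [Set.mem_preimage, Set.mem_Iic, Set.mem_empty_iff_false, iff_false, not_le]
        exact lt_of_lt_of_le hs0 (hnonneg ω)
      rw [this]; exact MeasurableSet.empty
    push_neg at hs0
    set s' := min s T with hs'
    have hs'0 : 0 ≤ s' := le_min hs0 hT.le
    set A := ⋂ n : ℕ, ⋃ q : ℚ, {ω | r ω - 1/(n+1) < F ω (max 0 (min s' (q : ℝ)))} with hA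
    have hAmeas : MeasurableSet A := by
      apply MeasurableSet.iInter
      intro n
      apply MeasurableSet.iUnion
      intro q
      exact measurableSet_lt (hr.sub measurable_const) (hFm _)
    have : ρ ⁻¹' Set.Iic s = Wᶜ ∪ (W ∩ A) := by
      ext ω
      simp only [Set.mem_preimage, Set.mem_Iic, Set.mem_union, Set.mem_compl_iff,
        Set.mem_inter_iff]
      by_cases hω : ω ∈ W
      · simp only [hω, not_true_eq_false, false_or, true_and]
        have hρω : ρ ω = sInf (G ω) := by simp [hρ, hω]
        constructor
        · intro hle
          rw [hA]
          simp only [Set.mem_iInter, Set.mem_iUnion, Set.mem_setOf_eq]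
          intro n
          set t₀ := sInf (G ω) with ht₀
          have ht₀mem := hmem ω hω
          have ht₀s' : t₀ ∈ Set.Icc 0 s' := by
            refine ⟨ht₀mem.1.1, le_min ?_ ht₀mem.1.2⟩
            rw [← hρω]; exact hle
          have hopen : IsOpen {t : ℝ | r ω - 1/(n+1) < F ω t} :=
            isOpen_lt continuous_const (hFc ω hω)
          have ht₀in : t₀ ∈ {t : ℝ | r ω - 1/(n+1) < F ω t} := by
            have h1 : (0:ℝ) < 1/(n+1) := by positivity
            have := ht₀mem.2
            simp only [Set.mem_setOf_eq]
            linarith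
          obtain ⟨δ, hδ0, hball⟩ := Metric.isOpen_iff.mp hopen t₀ ht₀in
          obtain ⟨q, hq⟩ := exists_rat_near t₀ hδ0
          refine ⟨q, ?_⟩
          apply hball
          rw [Metric.mem_ball, Real.dist_eq]
          have := clamp_dist ht₀s'.1 ht₀s'.2 (q : ℝ)
          rw [abs_sub_comm t₀ (q : ℝ)] at hq
          exact lt_of_le_of_lt this hq
        · intro hA'
          rw [hA] at hA'
          simp only [Set.mem_iInter, Set.mem_iUnion, Set.mem_setOf_eq] at hA'
          choose q hq using hA'
          set t := fun n => max 0 (min s' ((q n : ℚ) : ℝ)) with ht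
          have htmem : ∀ n, t n ∈ Set.Icc 0 s' := fun n => clamp_mem hs'0 _
          obtain ⟨t₀, ht₀mem, φ, hφ, htends⟩ :=
            (isCompact_Icc (a := (0:ℝ)) (b := s')).tendsto_subseq htmem
          have hlim : Tendsto (fun k => F ω (t (φ k))) atTop (nhds (F ω t₀)) :=
            ((hFc ω hω).tendsto t₀).comp htends
          have hFt₀ : r ω ≤ F ω t₀ := by
            apply le_of_forall_pos_le_add
            intro ε hε
            obtain ⟨n, hn⟩ := exists_nat_one_div_lt hε
            have hev : ∀ᶠ k in atTop, r ω - ε ≤ F ω (t (φ k)) := by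
              filter_upwards [eventually_ge_atTop n] with k hk
              have h1 := hq (φ k)
              have h2 : (1:ℝ)/(φ k + 1) ≤ 1/(n+1) := by
                apply div_le_div_of_nonneg_left one_pos.le (by positivity)
                have : (n:ℝ) ≤ (φ k : ℝ) := by
                  exact_mod_cast hk.trans (hφ.le_apply)
                push_cast
                linarith
              push_cast at h1 h2 ⊢
              linarith
            have := ge_of_tendsto hlim hev
            linarith
          have ht₀G : t₀ ∈ G ω :=
            ⟨⟨ht₀mem.1, ht₀mem.2.trans (min_le_right s T)⟩, hFt₀⟩
          rw [hρω]
          calc sInf (G ω) ≤ t₀ := csInf_le ⟨0, fun u hu => hu.1.1⟩ ht₀G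
          _ ≤ s' := ht₀mem.2
          _ ≤ s := min_le_left s T
      · simp only [hω, not_false_eq_true, true_or, iff_true]
        have h' : ρ ω = 0 := by simp [hρ, hω]
        rw [h']
        exact hs0
    rw [this]
    exact hW.compl.union (hW.inter hAmeas)
  · intro ω hω
    have hρω : ρ ω = sInf (G ω) := by simp [hρ, hω]
    have h1 := hmem ω hω
    rw [← hρω] at h1
    refine ⟨h1.1, h1.2, ?_⟩
    intro t ht
    by_contra hcon
    push_neg at hcon
    have htG : t ∈ G ω := ⟨⟨ht.1, ht.2.le.trans h1.1.2⟩, hcon⟩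
    have := csInf_le (⟨0, fun u hu => hu.1.1⟩ : BddBelow (G ω)) htG
    rw [← hρω] at this
    exact absurd ht.2 (not_lt.mpr this)

end Select

section Phi

/-- `Φ ω t = Mf ω (cos πt) (sin πt)`. -/
def Phi (sm : L0 μ → S → S) (nrm : S → L0 μ) (e₁ e₂ : S) (ω : Ω) (t : ℝ) : ℝ :=
  Mf sm nrm e₁ e₂ ω (Real.cos (Real.pi * t)) (Real.sin (Real.pi * t))

variable (sm : L0 μ → S → S) (nrm : S → L0 μ) (e₁ e₂ : S)

lemma Phi_nonneg (ω : Ω) (t : ℝ) : 0 ≤ Phi sm nrm e₁ e₂ ω t :=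
  Mf_nonneg sm nrm e₁ e₂ ω _ _

lemma Phi_meas_t (t : ℝ) : Measurable (fun ω => Phi sm nrm e₁ e₂ ω t) :=
  Mf_meas_omega sm nrm e₁ e₂ _ _

lemma Phi_meas_comp {δ : Type*} [MeasurableSpace δ] {h : δ → Ω} {f : δ → ℝ}
    (hh : Measurable h) (hf : Measurable f) :
    Measurable fun d => Phi sm nrm e₁ e₂ (h d) (f d) :=
  Mf_meas_comp sm nrm e₁ e₂ hh
    (Real.measurable_cos.comp (hf.const_mul _))
    (Real.measurable_sin.comp (hf.const_mul _))

lemma Phi_cont (ω : Ω) : Continuous (Phi sm nrm e₁ e₂ ω) := by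
  have h1 : Continuous fun t : ℝ => ((Real.cos (Real.pi * t), Real.sin (Real.pi * t)) : ℝ × ℝ) :=
    (Real.continuous_cos.comp (continuous_const.mul continuous_id)).prodMk
      (Real.continuous_sin.comp (continuous_const.mul continuous_id))
  have h2 : Phi sm nrm e₁ e₂ ω = (fun p : ℝ × ℝ => Mf sm nrm e₁ e₂ ω p.1 p.2) ∘
      (fun t => (Real.cos (Real.pi * t), Real.sin (Real.pi * t))) := rfl
  rw [h2]
  exact (Mf_cont sm nrm e₁ e₂ ω).comp h1

lemma Phi_reduce (ω : Ω) (t : ℝ) :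
    Phi sm nrm e₁ e₂ ω (t - 2 * ⌊t/2⌋) = Phi sm nrm e₁ e₂ ω t := by
  unfold Phi
  have h1 : Real.pi * (t - 2 * ⌊t/2⌋) = Real.pi * t - ⌊t/2⌋ * (2 * Real.pi) := by ring
  rw [h1, Real.cos_sub_int_mul_two_pi, Real.sin_sub_int_mul_two_pi]

lemma mod2_mem (t : ℝ) : t - 2 * ⌊t/2⌋ ∈ Set.Icc (0:ℝ) 2 := by
  have h1 := Int.floor_le (t/2)
  have h2 := Int.lt_floor_add_one (t/2)
  constructor <;> [linarith; linarith]

end Phi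

section Pos

variable {sm : L0 μ → S → S} {nrm : S → L0 μ} {e₁ e₂ : S} {D : Set Ω}

/-- If the inf of `Φ ω` over a dense set of parameters is `0`, it attains `0` on `[0,2]`;
set of such `ω` is null, by `L⁰`-independence. -/
lemma Phi_pos (hRN : IsRNModule μ sm nrm) (hDm : MeasurableSet D)
    (hn1 : nrm e₁ = ind μ D) (hn2 : nrm e₂ = ind μ D)
    (hInd : Indep sm e₁ e₂ D) :
    ∀ᵐ ω ∂μ, ω ∈ D → ∀ t : ℝ, 0 < Phi sm nrm e₁ e₂ ω t := by
  classical
  set Zset := ⋂ n : ℕ, ⋃ q : ℚ, {ω | Phi sm nrm e₁ e₂ ω (max 0 (min 2 (q:ℝ))) < 1/(n+1)}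
    with hZset
  have hZm : MeasurableSet Zset := by
    apply MeasurableSet.iInter
    intro n
    apply MeasurableSet.iUnion
    intro q
    exact measurableSet_lt (Phi_meas_t sm nrm e₁ e₂ _) measurable_const
  set W₀ := D ∩ Zset with hW₀
  have hW₀m : MeasurableSet W₀ := hDm.inter hZm
  -- on `W₀`, `Φ ω` vanishes somewhere in `[0,2]`
  have hne : ∀ ω ∈ W₀, ∃ t ∈ Set.Icc (0:ℝ) 2, (0:ℝ) ≤ -Phi sm nrm e₁ e₂ ω t := by
    intro ω hω
    have hZ : ω ∈ Zset := hω.2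
    rw [hZset] at hZ
    simp only [Set.mem_iInter, Set.mem_iUnion, Set.mem_setOf_eq] at hZ
    choose q hq using hZ
    set tn := fun n => max 0 (min 2 ((q n : ℚ) : ℝ)) with htn
    have htmem : ∀ n, tn n ∈ Set.Icc (0:ℝ) 2 := fun n => clamp_mem (by norm_num) _
    obtain ⟨t₀, ht₀mem, φ, hφ, htends⟩ :=
      (isCompact_Icc (a := (0:ℝ)) (b := 2)).tendsto_subseq htmem
    have hlim : Tendsto (fun k => Phi sm nrm e₁ e₂ ω (tn (φ k))) atTop
        (nhds (Phi sm nrm e₁ e₂ ω t₀)) :=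
      ((Phi_cont sm nrm e₁ e₂ ω).tendsto t₀).comp htends
    have hPhi0 : Phi sm nrm e₁ e₂ ω t₀ ≤ 0 := by
      have h2 : Phi sm nrm e₁ e₂ ω t₀ ≤ 0 + 0 := by
        apply le_of_forall_pos_le_add
        intro ε hε
        obtain ⟨n, hn⟩ := exists_nat_one_div_lt hε
        have hev : ∀ᶠ k in atTop, Phi sm nrm e₁ e₂ ω (tn (φ k)) ≤ 0 + ε := by
          filter_upwards [eventually_ge_atTop n] with k hk
          have h1 := hq (φ k)
          have h2 : (1:ℝ)/(φ k + 1) ≤ 1/(n+1) := by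
            apply div_le_div_of_nonneg_left one_pos.le (by positivity)
            have : (n:ℝ) ≤ (φ k : ℝ) := by exact_mod_cast hk.trans (hφ.le_apply)
            linarith
          push_cast at h1 h2 ⊢
          linarith
        have := le_of_tendsto hlim hev
        linarith
      linarith
    exact ⟨t₀, ht₀mem, by linarith⟩
  obtain ⟨τ₀, hτ₀m, hτ₀⟩ := select (μ := μ) (fun ω t => -Phi sm nrm e₁ e₂ ω t) 2 (by norm_num)
    W₀ hW₀m (fun t => (Phi_meas_t sm nrm e₁ e₂ t).neg)
    (fun ω _ => (Phi_cont sm nrm e₁ e₂ ω).neg) (fun _ => 0) measurable_const hne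
  set α₀ := fun ω => if ω ∈ W₀ then Real.cos (Real.pi * τ₀ ω) else 0 with hα₀
  set β₀ := fun ω => if ω ∈ W₀ then Real.sin (Real.pi * τ₀ ω) else 0 with hβ₀
  have hα₀m : Measurable α₀ :=
    Measurable.ite hW₀m (Real.measurable_cos.comp (hτ₀m.const_mul _)) measurable_const
  have hβ₀m : Measurable β₀ :=
    Measurable.ite hW₀m (Real.measurable_sin.comp (hτ₀m.const_mul _)) measurable_const
  have hM00 : ∀ᵐ ω ∂μ, Mf sm nrm e₁ e₂ ω 0 0 = 0 := by
    filter_upwards [Mf_eq_nrm hRN hDm hn1 hn2 0 0, AEEqFun.coeFn_zero (β := ℝ) (μ := μ)]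
      with ω a1 a2
    rw [a1, vec_zero hRN, hRN.nrm_zero, a2]; rfl
  -- the combination with coefficients `α₀, β₀` has zero norm
  have hzero : nrm (sm (AEEqFun.mk α₀ hα₀m.aestronglyMeasurable) e₁ +
      sm (AEEqFun.mk β₀ hβ₀m.aestronglyMeasurable) e₂) = 0 := by
    apply AEEqFun.ext
    filter_upwards [nrm_comb_eq hRN hDm hn1 hn2 α₀ β₀ hα₀m hβ₀m, hM00,
      AEEqFun.coeFn_zero (β := ℝ) (μ := μ)] with ω a1 a2 a3
    rw [a1, a3]
    by_cases hω : ω ∈ W₀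
    · obtain ⟨hIcc, hFρ, _⟩ := hτ₀ ω hω
      have hphi : Phi sm nrm e₁ e₂ ω (τ₀ ω) = 0 :=
        le_antisymm (by linarith) (Phi_nonneg sm nrm e₁ e₂ ω (τ₀ ω))
      simp only [hα₀, hβ₀, if_pos hω]
      exact hphi.trans (by norm_num)
    · simp only [hα₀, hβ₀, if_neg hω]
      exact a2.trans (by norm_num)
  have hV0 := hRN.nrm_eq_zero _ hzero
  -- independence forces `α₀ = β₀ = 0` a.e.
  have hid1 : AEEqFun.mk α₀ hα₀m.aestronglyMeasurable * ind μ D =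
      AEEqFun.mk α₀ hα₀m.aestronglyMeasurable := by
    apply AEEqFun.ext
    filter_upwards [AEEqFun.coeFn_mul (AEEqFun.mk α₀ hα₀m.aestronglyMeasurable) (ind μ D),
      AEEqFun.coeFn_mk α₀ hα₀m.aestronglyMeasurable, ind_coe hDm] with ω a1 a2 a3
    rw [a1]
    simp only [Pi.mul_apply]
    rw [a2, a3]
    by_cases hω : ω ∈ W₀
    · simp [Set.indicator_of_mem (hW₀ ▸ hω : ω ∈ D ∩ Zset).1]
    · simp [hα₀, hω]
  have hid2 : AEEqFun.mk β₀ hβ₀m.aestronglyMeasurable * ind μ D =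
      AEEqFun.mk β₀ hβ₀m.aestronglyMeasurable := by
    apply AEEqFun.ext
    filter_upwards [AEEqFun.coeFn_mul (AEEqFun.mk β₀ hβ₀m.aestronglyMeasurable) (ind μ D),
      AEEqFun.coeFn_mk β₀ hβ₀m.aestronglyMeasurable, ind_coe hDm] with ω a1 a2 a3
    rw [a1]
    simp only [Pi.mul_apply]
    rw [a2, a3]
    by_cases hω : ω ∈ W₀
    · simp [Set.indicator_of_mem (hW₀ ▸ hω : ω ∈ D ∩ Zset).1]
    · simp [hβ₀, hω]
  have hconc := hInd (AEEqFun.mk α₀ hα₀m.aestronglyMeasurable)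
    (AEEqFun.mk β₀ hβ₀m.aestronglyMeasurable) (by rw [hid1, hid2]; exact hV0)
  have hα0 : ∀ᵐ ω ∂μ, α₀ ω = 0 := by
    have h1 := hconc.1
    rw [hid1] at h1
    have h2 : ⇑(0 : L0 μ) =ᵐ[μ] α₀ := by rw [← h1]; exact AEEqFun.coeFn_mk _ _
    filter_upwards [h2, AEEqFun.coeFn_zero (β := ℝ) (μ := μ)] with ω a1 a3
    rw [← a1, a3]; rfl
  have hβ0 : ∀ᵐ ω ∂μ, β₀ ω = 0 := by
    have h1 := hconc.2
    rw [hid2] at h1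
    have h2 : ⇑(0 : L0 μ) =ᵐ[μ] β₀ := by rw [← h1]; exact AEEqFun.coeFn_mk _ _
    filter_upwards [h2, AEEqFun.coeFn_zero (β := ℝ) (μ := μ)] with ω a1 a3
    rw [← a1, a3]; rfl
  have hW₀null : ∀ᵐ ω ∂μ, ω ∉ W₀ := by
    filter_upwards [hα0, hβ0] with ω h1 h2
    intro hω
    rw [hα₀] at h1; rw [hβ₀] at h2
    simp only [if_pos hω] at h1 h2
    have := Real.sin_sq_add_cos_sq (Real.pi * τ₀ ω)
    rw [h1, h2] at this
    norm_num at this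
  -- conclude positivity
  filter_upwards [hW₀null] with ω hω hD t
  have hZ : ω ∉ Zset := fun hZ => hω ⟨hD, hZ⟩
  rw [hZset] at hZ
  simp only [Set.mem_iInter, Set.mem_iUnion, Set.mem_setOf_eq, not_forall, not_exists,
    not_lt] at hZ
  obtain ⟨n, hn⟩ := hZ
  have hpos : (0:ℝ) < 1/(n+1) := by positivity
  have key : ∀ s ∈ Set.Icc (0:ℝ) 2, 1/((n:ℝ)+1) ≤ Phi sm nrm e₁ e₂ ω s := by
    intro s hs
    by_contra hcon
    push_neg at hcon
    have hopen : IsOpen {u : ℝ | Phi sm nrm e₁ e₂ ω u < 1/((n:ℝ)+1)} :=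
      isOpen_lt (Phi_cont sm nrm e₁ e₂ ω) continuous_const
    obtain ⟨δ, hδ0, hball⟩ := Metric.isOpen_iff.mp hopen s hcon
    obtain ⟨q, hq⟩ := exists_rat_near s hδ0
    have hcl := clamp_dist hs.1 hs.2 (q : ℝ)
    rw [abs_sub_comm s (q : ℝ)] at hq
    have : max 0 (min 2 (q:ℝ)) ∈ {u : ℝ | Phi sm nrm e₁ e₂ ω u < 1/((n:ℝ)+1)} := by
      apply hball
      rw [Metric.mem_ball, Real.dist_eq]
      exact lt_of_le_of_lt hcl hq
    have h2 := hn q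
    push_cast at h2 this
    simp only [Set.mem_setOf_eq] at this
    linarith
  have := key (t - 2 * ⌊t/2⌋) (mod2_mem t)
  rw [Phi_reduce] at this
  linarith

end Pos

section Normalize

variable {sm : L0 μ → S → S} {nrm : S → L0 μ} {D : Set Ω}

lemma cst_neg (r : ℝ) : cst μ (-r) = -cst μ r := by
  apply AEEqFun.ext
  filter_upwards [cst_coe (μ := μ) (-r), cst_coe (μ := μ) r, AEEqFun.coeFn_neg (cst μ r)]
    with ω a1 a2 a3
  rw [a1, a3]
  simp [a2]

lemma vec_one {e₁ e₂ : S} (hRN : IsRNModule μ sm nrm) : vec sm e₁ e₂ 1 0 = e₁ := by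
  unfold vec
  rw [cst_one, cst_zero, hRN.one_smul, hRN.zero_sm, add_zero]

lemma vec_neg_one {e₁ e₂ : S} (hRN : IsRNModule μ sm nrm) : vec sm e₁ e₂ (-1) 0 = -e₁ := by
  unfold vec
  rw [cst_zero, hRN.zero_sm, add_zero, show (-1 : ℝ) = -(1:ℝ) by norm_num, cst_neg,
    cst_one, hRN.neg_sm, hRN.one_smul]

/-- an indicator supported inside `D` absorbs `ind μ D`. -/
lemma mk_mul_ind {W : Set Ω} (hDm : MeasurableSet D) (hWD : W ⊆ D) (f : Ω → ℝ)
    (hf : ∀ ω ∉ W, f ω = 0) (hfm : Measurable f) :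
    AEEqFun.mk f hfm.aestronglyMeasurable * ind μ D = AEEqFun.mk f hfm.aestronglyMeasurable := by
  apply AEEqFun.ext
  filter_upwards [AEEqFun.coeFn_mul (AEEqFun.mk f hfm.aestronglyMeasurable) (ind μ D),
    AEEqFun.coeFn_mk f hfm.aestronglyMeasurable, ind_coe hDm] with ω a1 a2 a3
  rw [a1]
  simp only [Pi.mul_apply]
  rw [a2, a3]
  by_cases hω : ω ∈ W
  · simp [Set.indicator_of_mem (hWD hω)]
  · simp [hf ω hω]

/-- From an `L⁰`-independent pair on `D`, construct a pair of "unit" vectors on `D`. -/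
lemma exists_unit (hRN : IsRNModule μ sm nrm) (hDm : MeasurableSet D) (x y : S)
    (hxy : Indep sm x y D) :
    ∃ e₁ e₂ : S, nrm e₁ = ind μ D ∧ nrm e₂ = ind μ D ∧ Indep sm e₁ e₂ D := by
  classical
  -- positivity of the norm of `z` on `D`
  have hpos : ∀ z w : S, (∀ ξ η : L0 μ, sm (ξ * ind μ D) z + sm (η * ind μ D) w = 0 →
        ξ * ind μ D = 0) →
      ∀ᵐ ω ∂μ, ω ∈ D → 0 < (nrm z) ω := by
    intro z w hz
    set g := fun ω => (nrm z) ω with hg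
    have hgm : Measurable g := (nrm z).measurable
    set E := D ∩ {ω | g ω ≤ 0} with hE
    have hEm : MeasurableSet E := hDm.inter (measurableSet_le hgm measurable_const)
    have hEz : nrm (sm (ind μ E) z) = 0 := by
      rw [hRN.nrm_smul, L0_abs_ind hEm]
      apply AEEqFun.ext
      filter_upwards [AEEqFun.coeFn_mul (ind μ E) (nrm z), ind_coe hEm,
        nrm_coe_nonneg hRN z, AEEqFun.coeFn_zero (β := ℝ) (μ := μ)] with ω a1 a2 a3 a4
      rw [a1, a4]
      simp only [Pi.mul_apply]
      rw [a2]
      by_cases hω : ω ∈ E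
      · have h1 : g ω ≤ 0 := hω.2
        have : (nrm z) ω = 0 := le_antisymm h1 a3
        simp [Set.indicator_of_mem hω, this]
      · simp [Set.indicator_of_notMem hω]
    have hEzero := hRN.nrm_eq_zero _ hEz
    have hind : ind μ E * ind μ D = ind μ E := by
      apply AEEqFun.ext
      filter_upwards [AEEqFun.coeFn_mul (ind μ E) (ind μ D), ind_coe hEm, ind_coe hDm]
        with ω a1 a2 a3
      rw [a1]
      simp only [Pi.mul_apply]
      rw [a2, a3]
      by_cases hω : ω ∈ E
      · simp [Set.indicator_of_mem hω, Set.indicator_of_mem hω.1]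
      · simp [Set.indicator_of_notMem hω]
    have := hz (ind μ E) 0 (by
      rw [hind, L0_zero_mul, hRN.zero_sm, add_zero]
      exact hEzero)
    rw [hind] at this
    have hae : ∀ᵐ ω ∂μ, ω ∉ E := by
      have h2 : ⇑(0 : L0 μ) =ᵐ[μ] E.indicator (fun _ => (1:ℝ)) := by
        rw [← this]; exact ind_coe hEm
      filter_upwards [h2, AEEqFun.coeFn_zero (β := ℝ) (μ := μ)] with ω a1 a3
      intro hω
      have hz0 : E.indicator (fun _ => (1:ℝ)) ω = 0 := by rw [← a1, a3]; rfl
      rw [Set.indicator_of_mem hω] at hz0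
      norm_num at hz0
    filter_upwards [hae] with ω hω hD
    by_contra hcon
    push_neg at hcon
    exact hω ⟨hD, hcon⟩
  have hposx : ∀ᵐ ω ∂μ, ω ∈ D → 0 < (nrm x) ω :=
    hpos x y (fun ξ η h => (hxy ξ η h).1)
  have hposy : ∀ᵐ ω ∂μ, ω ∈ D → 0 < (nrm y) ω := by
    -- apply `hpos` with the roles of `x` and `y` swapped
    have hyx : Indep sm y x D := by
      intro ξ η h
      have := hxy η ξ (by rw [add_comm]; exact h)
      exact ⟨this.2, this.1⟩
    exact hpos y x (fun ξ η h => (hyx ξ η h).1)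
  -- normalized vectors
  set ξ₁ := fun ω => if ω ∈ D then ((nrm x) ω)⁻¹ else 0 with hξ₁
  set ξ₂ := fun ω => if ω ∈ D then ((nrm y) ω)⁻¹ else 0 with hξ₂
  have hξ₁m : Measurable ξ₁ := Measurable.ite hDm (nrm x).measurable.inv measurable_const
  have hξ₂m : Measurable ξ₂ := Measurable.ite hDm (nrm y).measurable.inv measurable_const
  refine ⟨sm (AEEqFun.mk ξ₁ hξ₁m.aestronglyMeasurable) x,
    sm (AEEqFun.mk ξ₂ hξ₂m.aestronglyMeasurable) y, ?_, ?_, ?_⟩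
  · rw [hRN.nrm_smul]
    apply AEEqFun.ext
    filter_upwards [AEEqFun.coeFn_mul (|AEEqFun.mk ξ₁ hξ₁m.aestronglyMeasurable|) (nrm x),
      L0_abs_coe (AEEqFun.mk ξ₁ hξ₁m.aestronglyMeasurable),
      AEEqFun.coeFn_mk ξ₁ hξ₁m.aestronglyMeasurable, ind_coe hDm, hposx] with ω a1 a2 a3 a4 a5
    rw [a1]
    simp only [Pi.mul_apply]
    rw [a2, a3, a4]
    by_cases hω : ω ∈ D
    · have hp := a5 hω
      rw [hξ₁]
      simp only [if_pos hω, Set.indicator_of_mem hω]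
      rw [abs_of_pos (inv_pos.mpr hp)]
      exact inv_mul_cancel₀ (ne_of_gt hp)
    · rw [hξ₁]
      simp [if_neg hω, Set.indicator_of_notMem hω]
  · rw [hRN.nrm_smul]
    apply AEEqFun.ext
    filter_upwards [AEEqFun.coeFn_mul (|AEEqFun.mk ξ₂ hξ₂m.aestronglyMeasurable|) (nrm y),
      L0_abs_coe (AEEqFun.mk ξ₂ hξ₂m.aestronglyMeasurable),
      AEEqFun.coeFn_mk ξ₂ hξ₂m.aestronglyMeasurable, ind_coe hDm, hposy] with ω a1 a2 a3 a4 a5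
    rw [a1]
    simp only [Pi.mul_apply]
    rw [a2, a3, a4]
    by_cases hω : ω ∈ D
    · have hp := a5 hω
      rw [hξ₂]
      simp only [if_pos hω, Set.indicator_of_mem hω]
      rw [abs_of_pos (inv_pos.mpr hp)]
      exact inv_mul_cancel₀ (ne_of_gt hp)
    · rw [hξ₂]
      simp [if_neg hω, Set.indicator_of_notMem hω]
  · intro ξ η heq
    have key1 : sm (ξ * ind μ D) (sm (AEEqFun.mk ξ₁ hξ₁m.aestronglyMeasurable) x) =
        sm ((ξ * AEEqFun.mk ξ₁ hξ₁m.aestronglyMeasurable) * ind μ D) x := by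
      rw [← hRN.mul_smul, mul_right_comm]
    have key2 : sm (η * ind μ D) (sm (AEEqFun.mk ξ₂ hξ₂m.aestronglyMeasurable) y) =
        sm ((η * AEEqFun.mk ξ₂ hξ₂m.aestronglyMeasurable) * ind μ D) y := by
      rw [← hRN.mul_smul, mul_right_comm]
    rw [key1, key2] at heq
    have hconc := hxy _ _ heq
    constructor
    · apply AEEqFun.ext
      have h1 : ⇑((ξ * AEEqFun.mk ξ₁ hξ₁m.aestronglyMeasurable : L0 μ) * ind μ D) =ᵐ[μ]
          ⇑(0 : L0 μ) := by rw [hconc.1]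
      filter_upwards [h1, AEEqFun.coeFn_mul (ξ * AEEqFun.mk ξ₁ hξ₁m.aestronglyMeasurable)
          (ind μ D), AEEqFun.coeFn_mul ξ (AEEqFun.mk ξ₁ hξ₁m.aestronglyMeasurable),
        AEEqFun.coeFn_mk ξ₁ hξ₁m.aestronglyMeasurable, ind_coe hDm, hposx,
        AEEqFun.coeFn_mul ξ (ind μ D), AEEqFun.coeFn_zero (β := ℝ) (μ := μ)]
        with ω a1 a2 a3 a4 a5 a6 a7 a8
      rw [a2] at a1
      simp only [Pi.mul_apply] at a1
      rw [a3] at a1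
      simp only [Pi.mul_apply] at a1
      rw [a4, a5, a8] at a1
      rw [a7]
      simp only [Pi.mul_apply]
      rw [a5, a8]
      by_cases hω : ω ∈ D
      · have hp := a6 hω
        rw [hξ₁] at a1
        simp only [if_pos hω, Set.indicator_of_mem hω, mul_one] at a1 ⊢
        have hinv : ((nrm x) ω)⁻¹ ≠ 0 := inv_ne_zero (ne_of_gt hp)
        have a1' : (⇑ξ ω) * ((nrm x) ω)⁻¹ = 0 := a1
        rcases mul_eq_zero.mp a1' with h | h
        · exact h
        · exact absurd h hinv
      · simp [Set.indicator_of_notMem hω]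
    · apply AEEqFun.ext
      have h1 : ⇑((η * AEEqFun.mk ξ₂ hξ₂m.aestronglyMeasurable : L0 μ) * ind μ D) =ᵐ[μ]
          ⇑(0 : L0 μ) := by rw [hconc.2]
      filter_upwards [h1, AEEqFun.coeFn_mul (η * AEEqFun.mk ξ₂ hξ₂m.aestronglyMeasurable)
          (ind μ D), AEEqFun.coeFn_mul η (AEEqFun.mk ξ₂ hξ₂m.aestronglyMeasurable),
        AEEqFun.coeFn_mk ξ₂ hξ₂m.aestronglyMeasurable, ind_coe hDm, hposy,
        AEEqFun.coeFn_mul η (ind μ D), AEEqFun.coeFn_zero (β := ℝ) (μ := μ)]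
        with ω a1 a2 a3 a4 a5 a6 a7 a8
      rw [a2] at a1
      simp only [Pi.mul_apply] at a1
      rw [a3] at a1
      simp only [Pi.mul_apply] at a1
      rw [a4, a5, a8] at a1
      rw [a7]
      simp only [Pi.mul_apply]
      rw [a5, a8]
      by_cases hω : ω ∈ D
      · have hp := a6 hω
        rw [hξ₂] at a1
        simp only [if_pos hω, Set.indicator_of_mem hω, mul_one] at a1 ⊢
        have hinv : ((nrm y) ω)⁻¹ ≠ 0 := inv_ne_zero (ne_of_gt hp)
        have a1' : (⇑η ω) * ((nrm y) ω)⁻¹ = 0 := a1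
        rcases mul_eq_zero.mp a1' with h | h
        · exact h
        · exact absurd h hinv
      · simp [Set.indicator_of_notMem hω]

end Normalize

section Construct

variable {sm : L0 μ → S → S} {nrm : S → L0 μ} {D : Set Ω}

lemma forward_dir (hRN : IsRNModule μ sm nrm) (hDm : MeasurableSet D)
    (hRank : RankGe2 sm D) :
    ∀ ε : L0 μ, Admissible μ D ε →
      ∃ u v : S, nrm u = ind μ D ∧ nrm v = ind μ D ∧ nrm (u - v) = ε * ind μ D := by
  classical
  obtain ⟨x, y, hxy⟩ := hRank
  obtain ⟨e₁, e₂, hn1, hn2, hInd⟩ := exists_unit hRN hDm x y hxy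
  intro ε hadm
  -- the a.e. "good" properties
  have hM10 : ∀ᵐ ω ∂μ, Mf sm nrm e₁ e₂ ω 1 0 = D.indicator (fun _ => (1:ℝ)) ω := by
    filter_upwards [Mf_eq_nrm hRN hDm hn1 hn2 1 0, ind_coe hDm] with ω a1 a2
    rw [a1, vec_one hRN, hn1, a2]
  have hM1n : ∀ᵐ ω ∂μ, Mf sm nrm e₁ e₂ ω (-1) 0 = D.indicator (fun _ => (1:ℝ)) ω := by
    filter_upwards [Mf_eq_nrm hRN hDm hn1 hn2 (-1) 0, ind_coe hDm] with ω a1 a2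
    rw [a1, vec_neg_one hRN, hRN.nrm_neg, hn1, a2]
  have hM00 : ∀ᵐ ω ∂μ, Mf sm nrm e₁ e₂ ω 0 0 = 0 := by
    filter_upwards [Mf_eq_nrm hRN hDm hn1 hn2 0 0, AEEqFun.coeFn_zero (β := ℝ) (μ := μ)]
      with ω a1 a2
    rw [a1, vec_zero hRN, hRN.nrm_zero, a2]; rfl
  set P := fun ω => Mf sm nrm e₁ e₂ ω 1 0 = D.indicator (fun _ => (1:ℝ)) ω ∧
    Mf sm nrm e₁ e₂ ω (-1) 0 = D.indicator (fun _ => (1:ℝ)) ω ∧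
    Mf sm nrm e₁ e₂ ω 0 0 = 0 ∧
    (∀ r a b : ℝ, Mf sm nrm e₁ e₂ ω (r * a) (r * b) = |r| * Mf sm nrm e₁ e₂ ω a b) ∧
    (ω ∈ D → ((∀ t : ℝ, 0 < Phi sm nrm e₁ e₂ ω t) ∧ (0 < ε ω ∧ ε ω ≤ 2))) with hPdef
  have hP : ∀ᵐ ω ∂μ, P ω := by
    filter_upwards [hM10, hM1n, hM00, Mf_hom hRN hDm hn1 hn2,
      Phi_pos hRN hDm hn1 hn2 hInd, hadm.2] with ω a1 a2 a3 a4 a5 a6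
    exact ⟨a1, a2, a3, a4, fun hD => ⟨a5 hD, a6 hD⟩⟩
  set T0 := toMeasurable μ {ω | ¬ P ω} with hT0
  have hT0null : μ T0 = 0 := by
    rw [hT0, measure_toMeasurable]
    exact hP
  set W := D \ T0 with hWdef
  have hWm : MeasurableSet W := hDm.diff (measurableSet_toMeasurable μ _)
  have hWD : W ⊆ D := Set.diff_subset
  have hWP : ∀ ω ∈ W, P ω := by
    intro ω hω
    by_contra h
    exact hω.2 (subset_toMeasurable μ _ h)
  have hDWae : ∀ᵐ ω ∂μ, ω ∈ D → ω ∈ W := by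
    have h1 : ∀ᵐ ω ∂μ, ω ∉ T0 := by
      rw [ae_iff]
      simpa using hT0null
    filter_upwards [h1] with ω h2 hD
    exact ⟨hD, h2⟩
  -- the path functional
  set Psi := fun ω t => Mf sm nrm e₁ e₂ ω
    (Real.cos (Real.pi * t) / Phi sm nrm e₁ e₂ ω t - 1)
    (Real.sin (Real.pi * t) / Phi sm nrm e₁ e₂ ω t) with hPsidef
  set F := fun ω t => min (Psi ω t) 4 with hFdef
  have hFm : ∀ t : ℝ, Measurable (fun ω => F ω t) := by
    intro t
    apply Measurable.min _ measurable_const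
    exact Mf_meas_comp sm nrm e₁ e₂ measurable_id
      ((measurable_const.div (Phi_meas_t sm nrm e₁ e₂ t)).sub measurable_const)
      (measurable_const.div (Phi_meas_t sm nrm e₁ e₂ t))
  have hFc : ∀ ω ∈ W, Continuous (F ω) := by
    intro ω hω
    apply Continuous.min _ continuous_const
    have hpos : ∀ t, Phi sm nrm e₁ e₂ ω t ≠ 0 :=
      fun t => ne_of_gt (((hWP ω hω).2.2.2.2 (hWD hω)).1 t)
    have hc1 : Continuous fun t : ℝ =>
        ((Real.cos (Real.pi * t) / Phi sm nrm e₁ e₂ ω t - 1,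
          Real.sin (Real.pi * t) / Phi sm nrm e₁ e₂ ω t) : ℝ × ℝ) := by
      apply Continuous.prodMk
      · exact ((Real.continuous_cos.comp (continuous_const.mul continuous_id)).div
          (Phi_cont sm nrm e₁ e₂ ω) hpos).sub continuous_const
      · exact (Real.continuous_sin.comp (continuous_const.mul continuous_id)).div
          (Phi_cont sm nrm e₁ e₂ ω) hpos
    have h2 : Psi ω = (fun p : ℝ × ℝ => Mf sm nrm e₁ e₂ ω p.1 p.2) ∘
        (fun t : ℝ => ((Real.cos (Real.pi * t) / Phi sm nrm e₁ e₂ ω t - 1,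
          Real.sin (Real.pi * t) / Phi sm nrm e₁ e₂ ω t) : ℝ × ℝ)) := rfl
    rw [hPsidef] at h2 ⊢
    rw [h2]
    exact (Mf_cont sm nrm e₁ e₂ ω).comp hc1
  -- values of `Φ` and `Ψ` at the endpoints, on `W`
  have hΦ0 : ∀ ω ∈ W, Phi sm nrm e₁ e₂ ω 0 = 1 := by
    intro ω hω
    have h1 : Phi sm nrm e₁ e₂ ω 0 = Mf sm nrm e₁ e₂ ω 1 0 := by
      unfold Phi
      norm_num
    rw [h1, (hWP ω hω).1, Set.indicator_of_mem (hWD hω)]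
  have hΦ1 : ∀ ω ∈ W, Phi sm nrm e₁ e₂ ω 1 = 1 := by
    intro ω hω
    have h1 : Phi sm nrm e₁ e₂ ω 1 = Mf sm nrm e₁ e₂ ω (-1) 0 := by
      unfold Phi
      rw [mul_one, Real.cos_pi, Real.sin_pi]
    rw [h1, (hWP ω hω).2.1, Set.indicator_of_mem (hWD hω)]
  have hPsi0 : ∀ ω ∈ W, Psi ω 0 = 0 := by
    intro ω hω
    have h1 : Psi ω 0 = Mf sm nrm e₁ e₂ ω 0 0 := by
      rw [hPsidef]
      simp only [mul_zero, Real.cos_zero, Real.sin_zero, hΦ0 ω hω]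
      norm_num
    rw [h1, (hWP ω hω).2.2.1]
  have hPsi1 : ∀ ω ∈ W, Psi ω 1 = 2 := by
    intro ω hω
    have h1 : Psi ω 1 = Mf sm nrm e₁ e₂ ω (-2) 0 := by
      rw [hPsidef]
      simp only [mul_one, Real.cos_pi, Real.sin_pi, hΦ1 ω hω]
      norm_num
    have h2 := (hWP ω hω).2.2.2.1 (-2) 1 0
    simp only [mul_one, mul_zero] at h2
    rw [h1, h2, (hWP ω hω).1, Set.indicator_of_mem (hWD hω)]
    norm_num
  have hne : ∀ ω ∈ W, ∃ t ∈ Set.Icc (0:ℝ) 1, ε ω ≤ F ω t := by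
    intro ω hω
    refine ⟨1, ⟨zero_le_one, le_refl 1⟩, ?_⟩
    rw [hFdef]
    simp only
    rw [hPsi1 ω hω]
    have := ((hWP ω hω).2.2.2.2 (hWD hω)).2.2
    rw [min_eq_left (by norm_num : (2:ℝ) ≤ 4)]
    exact this
  obtain ⟨τ, hτm, hτ⟩ := select (μ := μ) F 1 one_pos W hWm hFm hFc ε ε.measurable hne
  -- on `W`, `Ψ ω (τ ω) = ε ω`
  have hval : ∀ ω ∈ W, Psi ω (τ ω) = ε ω := by
    intro ω hω
    obtain ⟨hIcc, hle, hlt⟩ := hτ ω hω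
    have hε2 := ((hWP ω hω).2.2.2.2 (hWD hω)).2
    have hτpos : 0 < τ ω := by
      rcases lt_or_eq_of_le hIcc.1 with h | h
      · exact h
      · exfalso
        have hF0 : F ω 0 = 0 := by
          rw [hFdef]
          simp only
          rw [hPsi0 ω hω]
          norm_num
        rw [← h] at hle
        rw [hF0] at hle
        linarith [hε2.1]
    have hFle : F ω (τ ω) ≤ ε ω := by
      by_contra hc
      push_neg at hc
      have hopen : IsOpen {t : ℝ | ε ω < F ω t} :=
        isOpen_lt continuous_const (hFc ω hω)
      obtain ⟨δ, hδ0, hball⟩ := Metric.isOpen_iff.mp hopen (τ ω) hc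
      set m := min (δ/2) (τ ω / 2) with hm
      have hm0 : 0 < m := lt_min (by linarith) (by linarith)
      set t := τ ω - m with ht
      have ht0 : 0 ≤ t := by
        have : m ≤ τ ω / 2 := min_le_right _ _
        rw [ht]; linarith
      have htτ : t < τ ω := by rw [ht]; linarith
      have htU : t ∈ {t : ℝ | ε ω < F ω t} := by
        apply hball
        rw [Metric.mem_ball, Real.dist_eq, ht]
        have : m ≤ δ/2 := min_le_left _ _
        rw [abs_of_nonpos (by linarith)]
        linarith
      have := hlt t ⟨ht0, htτ⟩
      simp only [Set.mem_setOf_eq] at htU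
      linarith
    have hFeq : F ω (τ ω) = ε ω := le_antisymm hFle hle
    rw [hFdef] at hFeq
    simp only at hFeq
    rcases le_or_gt (Psi ω (τ ω)) 4 with h | h
    · rwa [min_eq_left h] at hFeq
    · exfalso
      rw [min_eq_right (by linarith)] at hFeq
      linarith [hε2.2]
  -- the coefficients
  set Φτ := fun ω => Phi sm nrm e₁ e₂ ω (τ ω) with hΦτ
  have hΦτm : Measurable Φτ := Phi_meas_comp sm nrm e₁ e₂ measurable_id hτm
  set α := fun ω => if ω ∈ W then Real.cos (Real.pi * τ ω) / Φτ ω else 0 with hα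
  set β := fun ω => if ω ∈ W then Real.sin (Real.pi * τ ω) / Φτ ω else 0 with hβ
  have hαm : Measurable α := Measurable.ite hWm
    ((Real.measurable_cos.comp (hτm.const_mul _)).div hΦτm) measurable_const
  have hβm : Measurable β := Measurable.ite hWm
    ((Real.measurable_sin.comp (hτm.const_mul _)).div hΦτm) measurable_const
  set v := sm (AEEqFun.mk α hαm.aestronglyMeasurable) e₁ +
    sm (AEEqFun.mk β hβm.aestronglyMeasurable) e₂ with hv
  refine ⟨e₁, v, hn1, ?_, ?_⟩
  · -- ‖v‖ = ind D
    apply AEEqFun.ext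
    filter_upwards [nrm_comb_eq hRN hDm hn1 hn2 α β hαm hβm, ind_coe hDm, hM00, hDWae]
      with ω a1 a2 a3 a4
    rw [a1, a2]
    by_cases hω : ω ∈ W
    · have hΦpos := ((hWP ω hω).2.2.2.2 (hWD hω)).1 (τ ω)
      have hhom := (hWP ω hω).2.2.2.1 (Φτ ω)⁻¹ (Real.cos (Real.pi * τ ω))
        (Real.sin (Real.pi * τ ω))
      have hαω : α ω = (Φτ ω)⁻¹ * Real.cos (Real.pi * τ ω) := by
        rw [hα]; simp only [if_pos hω]; rw [inv_mul_eq_div]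
      have hβω : β ω = (Φτ ω)⁻¹ * Real.sin (Real.pi * τ ω) := by
        rw [hβ]; simp only [if_pos hω]; rw [inv_mul_eq_div]
      rw [hαω, hβω, hhom]
      have hMfΦ : Mf sm nrm e₁ e₂ ω (Real.cos (Real.pi * τ ω)) (Real.sin (Real.pi * τ ω)) =
          Φτ ω := rfl
      rw [hMfΦ, abs_of_pos (inv_pos.mpr hΦpos), inv_mul_cancel₀ (ne_of_gt hΦpos),
        Set.indicator_of_mem (hWD hω)]
    · have hωD : ω ∉ D := fun hD => hω (a4 hD)
      have hα0 : α ω = 0 := by rw [hα]; simp [hω]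
      have hβ0 : β ω = 0 := by rw [hβ]; simp [hω]
      rw [hα0, hβ0, a3, Set.indicator_of_notMem hωD]
  · -- ‖e₁ - v‖ = ε • ind D
    have hid : e₁ - v = sm (AEEqFun.mk (fun ω => 1 - α ω)
        ((measurable_const.sub hαm).aestronglyMeasurable)) e₁ +
        sm (AEEqFun.mk (fun ω => -β ω) hβm.neg.aestronglyMeasurable) e₂ := by
      have h1 : (AEEqFun.mk (fun ω => 1 - α ω)
          ((measurable_const.sub hαm).aestronglyMeasurable) : L0 μ) =
          1 - AEEqFun.mk α hαm.aestronglyMeasurable := by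
        apply AEEqFun.ext
        filter_upwards [AEEqFun.coeFn_mk (fun ω => 1 - α ω)
            ((measurable_const.sub hαm).aestronglyMeasurable),
          AEEqFun.coeFn_sub (1 : L0 μ) (AEEqFun.mk α hαm.aestronglyMeasurable),
          L0_one_coe (μ := μ), AEEqFun.coeFn_mk α hαm.aestronglyMeasurable]
          with ω a1 a2 a3 a4
        rw [a1, a2]
        simp only [Pi.sub_apply]
        rw [a3, a4]
      have h2 : (AEEqFun.mk (fun ω => -β ω) hβm.neg.aestronglyMeasurable : L0 μ) =
          0 - AEEqFun.mk β hβm.aestronglyMeasurable := by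
        apply AEEqFun.ext
        filter_upwards [AEEqFun.coeFn_mk (fun ω => -β ω) hβm.neg.aestronglyMeasurable,
          AEEqFun.coeFn_sub (0 : L0 μ) (AEEqFun.mk β hβm.aestronglyMeasurable),
          AEEqFun.coeFn_zero (β := ℝ) (μ := μ), AEEqFun.coeFn_mk β hβm.aestronglyMeasurable]
          with ω a1 a2 a3 a4
        rw [a1, a2]
        simp only [Pi.sub_apply]
        rw [a3, a4]
        simp
      rw [h1, h2, hRN.sub_sm, hRN.sub_sm, hRN.one_smul, hRN.zero_sm, hv]
      abel
    rw [hid]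
    apply AEEqFun.ext
    filter_upwards [nrm_comb_eq hRN hDm hn1 hn2 (fun ω => 1 - α ω) (fun ω => -β ω)
        (measurable_const.sub hαm) hβm.neg,
      AEEqFun.coeFn_mul ε (ind μ D), ind_coe hDm, hM10, hDWae] with ω a1 a2 a3 a4 a5
    rw [a1, a2]
    simp only [Pi.mul_apply]
    rw [a3]
    by_cases hω : ω ∈ W
    · have hhom := (hWP ω hω).2.2.2.1 (-1)
        (Real.cos (Real.pi * τ ω) / Φτ ω - 1) (Real.sin (Real.pi * τ ω) / Φτ ω)
      have hαω : (1 : ℝ) - α ω =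
          (-1) * (Real.cos (Real.pi * τ ω) / Φτ ω - 1) := by
        rw [hα]; simp only [if_pos hω]; ring
      have hβω : -β ω = (-1) * (Real.sin (Real.pi * τ ω) / Φτ ω) := by
        rw [hβ]; simp only [if_pos hω]; ring
      rw [hαω, hβω, hhom]
      have hPsiτ : Mf sm nrm e₁ e₂ ω (Real.cos (Real.pi * τ ω) / Φτ ω - 1)
          (Real.sin (Real.pi * τ ω) / Φτ ω) = Psi ω (τ ω) := rfl
      rw [hPsiτ, hval ω hω, Set.indicator_of_mem (hWD hω)]
      norm_num
    · have hωD : ω ∉ D := fun hD => hω (a5 hD)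
      have hα0 : α ω = 0 := by rw [hα]; simp [hω]
      have hβ0 : β ω = 0 := by rw [hβ]; simp [hω]
      rw [hα0, hβ0]
      simp only [sub_zero, neg_zero]
      rw [a4, Set.indicator_of_notMem hωD]
      simp

end Construct

end Forward

/-- **Lemma 3.2.** For `D ⊂ H(S)` with `P(D) > 0`: `Rank_D(S) ≥ 2` iff for every
admissible `ε` there are `u, v` with `‖u‖ = ‖v‖ = I_D` and `‖u - v‖ = ε I_D`. -/
theorem rankGe2_iff_all_distances {Ω : Type*} [MeasurableSpace Ω] (μ : Measure Ω)
    [IsProbabilityMeasure μ] {S : Type*} [AddCommGroup S]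
    (sm : L0 μ → S → S) (nrm : S → L0 μ) (hRN : IsRNModule μ sm nrm)
    (H : Set Ω) (hH : IsSupport nrm H)
    (D : Set Ω) (hDm : MeasurableSet D) (hDH : aeSub μ D H) (hDpos : 0 < μ D) :
    RankGe2 sm D ↔
      ∀ ε : L0 μ, Admissible μ D ε →
        ∃ u v : S, nrm u = ind μ D ∧ nrm v = ind μ D ∧ nrm (u - v) = ε * ind μ D := by
  constructor
  · intro hRank
    exact forward_dir hRN hDm hRank
  · intro h
    exact backward_dir hRN D hDm h

end RNM
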